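/- arXiv:1801.03180 — 2 statements merged into one kernel-verified Lean document; each statement's English description precedes it below -/
import Mathlib

section
/- Let p be an odd prime and e : ℚ_p → ℂ^× the standard additive character (trivial on ℤ_p, nontrivial on p^{-1}ℤ_p). For a, b ∈ ℚ_p with max(|a|_p, |b|_p) > 1, the oscillatory integral G(a,b) := ∫_{ℤ_p} e(at + bt²) dt satisfies |G(a,b)| = |b|_p^{-1/2} if |a|_p ≤ |b|_p, and G(a,b) = 0 if |a|_p > |b|_p. -/
open MeasureTheory Finset
open scoped ENNReal

namespace Stmt12

variable {p : ℕ} [hp : Fact p.Prime]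

lemma hp1R : (1:ℝ) < p := by exact_mod_cast hp.out.one_lt

lemma hp0R : (0:ℝ) < p := lt_trans one_pos hp1R

lemma zpowle {u v : ℤ} : (p:ℝ)^u ≤ (p:ℝ)^v ↔ u ≤ v := zpow_le_zpow_iff_right₀ hp1R

/-- closed ball of radius `p^{-k}` around `x` -/
def Bl (x : ℚ_[p]) (k : ℕ) : Set ℚ_[p] := {t | ‖t - x‖ ≤ (p:ℝ)^(-(k:ℤ))}

lemma mem_Bl {x t : ℚ_[p]} {k : ℕ} : t ∈ Bl x k ↔ ‖t - x‖ ≤ (p:ℝ)^(-(k:ℤ)) := Iff.rfl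

lemma Bl_zero_zero : Bl (0:ℚ_[p]) 0 = {t : ℚ_[p] | ‖t‖ ≤ 1} := by
  ext t; simp [Bl]

lemma measurableSet_Bl [MeasurableSpace ℚ_[p]] [BorelSpace ℚ_[p]] {x : ℚ_[p]} {k : ℕ} :
    MeasurableSet (Bl x k) := by
  have : IsClosed (Bl x k) :=
    isClosed_le (Continuous.norm (continuous_id.sub continuous_const)) continuous_const
  exact this.measurableSet

lemma norm_nat_le_one (j : ℕ) : ‖(j:ℚ_[p])‖ ≤ 1 := by
  have := Padic.norm_int_le_one (p := p) (j : ℤ)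
  simpa using this

lemma Bl_subset (x : ℚ_[p]) (k d : ℕ) (j : ℕ) :
    Bl (x + (j:ℚ_[p]) * (p:ℚ_[p])^k) (k+d) ⊆ Bl x k := by
  intro t ht
  rw [mem_Bl] at ht ⊢
  have h2 : ‖(j:ℚ_[p]) * (p:ℚ_[p])^k‖ ≤ (p:ℝ)^(-(k:ℤ)) := by
    rw [norm_mul, Padic.norm_p_pow]
    calc ‖(j:ℚ_[p])‖ * (p:ℝ)^(-(k:ℤ)) ≤ 1 * (p:ℝ)^(-(k:ℤ)) := by
          apply mul_le_mul_of_nonneg_right (norm_nat_le_one j) (le_of_lt (zpow_pos hp0R _))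
      _ = (p:ℝ)^(-(k:ℤ)) := one_mul _
  have heq : t - x = (t - (x + (j:ℚ_[p])*(p:ℚ_[p])^k)) + (j:ℚ_[p])*(p:ℚ_[p])^k := by ring
  rw [heq]
  refine le_trans (Padic.nonarchimedean _ _) (max_le (le_trans ht ?_) h2)
  rw [zpowle]; omega

lemma Bl_eq (x : ℚ_[p]) (k d : ℕ) :
    Bl x k = ⋃ j ∈ Finset.range (p^d), Bl (x + (j:ℚ_[p]) * (p:ℚ_[p])^k) (k+d) := by
  ext t
  simp only [Set.mem_iUnion, Finset.mem_range, exists_prop]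
  constructor
  · intro ht
    rw [mem_Bl] at ht
    have hpk : ‖((p:ℚ_[p])^k)‖ = (p:ℝ)^(-(k:ℤ)) := Padic.norm_p_pow k
    have hppos : (0:ℝ) < (p:ℝ)^(-(k:ℤ)) := zpow_pos hp0R _
    have hpk0 : ((p:ℚ_[p])^k) ≠ 0 := by
      apply pow_ne_zero
      exact_mod_cast hp.out.ne_zero
    set y := (t - x)/(p:ℚ_[p])^k with hy
    have hy1 : ‖y‖ ≤ 1 := by
      rw [hy, norm_div, hpk, div_le_one hppos]
      exact ht
    set z : ℤ_[p] := ⟨y, hy1⟩ with hz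
    refine ⟨z.appr d, PadicInt.appr_lt z d, ?_⟩
    have hzd : ‖y - ((z.appr d : ℕ):ℚ_[p])‖ ≤ (p:ℝ)^(-(d:ℤ)) := by
      have h := (PadicInt.norm_le_pow_iff_mem_span_pow (z - ((z.appr d : ℕ) : ℤ_[p])) d).2
        (PadicInt.appr_spec d z)
      have : ((z - ((z.appr d : ℕ) : ℤ_[p]) : ℤ_[p]) : ℚ_[p]) = y - ((z.appr d : ℕ):ℚ_[p]) := by
        exact rfl
      rwa [PadicInt.norm_def, this] at h
    rw [mem_Bl]
    have heq : t - (x + ((z.appr d : ℕ):ℚ_[p]) * (p:ℚ_[p])^k)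
        = (y - ((z.appr d : ℕ):ℚ_[p])) * (p:ℚ_[p])^k := by
      rw [hy]; field_simp; try ring
    rw [heq, norm_mul, hpk]
    calc ‖y - ((z.appr d : ℕ):ℚ_[p])‖ * (p:ℝ)^(-(k:ℤ))
        ≤ (p:ℝ)^(-(d:ℤ)) * (p:ℝ)^(-(k:ℤ)) := by
          apply mul_le_mul_of_nonneg_right hzd (le_of_lt (zpow_pos hp0R _))
      _ = (p:ℝ)^(-((k+d:ℕ):ℤ)) := by
          rw [← zpow_add₀ (ne_of_gt hp0R)]
          congr 1; push_cast; ring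
  · rintro ⟨j, hj, ht⟩
    exact Bl_subset x k d j ht

lemma Bl_disj (x : ℚ_[p]) (k d : ℕ) :
    Set.Pairwise ↑(Finset.range (p^d))
      (Function.onFun Disjoint fun j : ℕ => Bl (x + (j:ℚ_[p]) * (p:ℚ_[p])^k) (k+d)) := by
  intro i hi j hj hij
  simp only [Finset.coe_range, Set.mem_Iio] at hi hj
  rw [Function.onFun, Set.disjoint_left]
  intro t hti htj
  exfalso
  apply hij
  have h : ‖((i:ℚ_[p]) - j) * (p:ℚ_[p])^k‖ ≤ (p:ℝ)^(-((k+d:ℕ):ℤ)) := by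
    have heq : ((i:ℚ_[p]) - j) * (p:ℚ_[p])^k
        = (t - (x + (j:ℚ_[p])*(p:ℚ_[p])^k)) - (t - (x + (i:ℚ_[p])*(p:ℚ_[p])^k)) := by ring
    rw [heq, sub_eq_add_neg]
    refine le_trans (Padic.nonarchimedean _ _) (max_le htj ?_)
    rw [norm_neg]; exact hti
  rw [norm_mul, Padic.norm_p_pow] at h
  have hid : ‖((i:ℚ_[p]) - j)‖ ≤ (p:ℝ)^(-(d:ℤ)) := by
    have hpos : (0:ℝ) < (p:ℝ)^(-(k:ℤ)) := zpow_pos hp0R _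
    rw [← le_div_iff₀ hpos] at h
    refine le_trans h (le_of_eq ?_)
    rw [← zpow_sub₀ (ne_of_gt hp0R)]
    congr 1; push_cast; ring
  have hcast : ((i:ℚ_[p]) - j) = (((i:ℤ) - (j:ℤ) : ℤ) : ℚ_[p]) := by push_cast; ring
  rw [hcast] at hid
  have hdvd : ((p:ℤ)^d) ∣ ((i:ℤ) - (j:ℤ)) := by
    have := (Padic.norm_int_le_pow_iff_dvd ((i:ℤ) - (j:ℤ)) d).1 hid
    exact_mod_cast this
  have habs : |(i:ℤ) - (j:ℤ)| < (p:ℤ)^d := by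
    have h1 : (i:ℤ) < (p:ℤ)^d := by exact_mod_cast hi
    have h2 : (j:ℤ) < (p:ℤ)^d := by exact_mod_cast hj
    have h3 : (0:ℤ) ≤ (i:ℤ) := Int.natCast_nonneg i
    have h4 : (0:ℤ) ≤ (j:ℤ) := Int.natCast_nonneg j
    rw [abs_lt]; omega
  have := Int.eq_zero_of_abs_lt_dvd hdvd habs
  omega

section Meas

variable [MeasurableSpace ℚ_[p]] [BorelSpace ℚ_[p]]
variable (m : Measure ℚ_[p]) [m.IsAddLeftInvariant]

lemma measure_Bl_translate (x : ℚ_[p]) (k : ℕ) : m (Bl x k) = m (Bl 0 k) := by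
  have h : Bl x k = (fun t => -x + t) ⁻¹' (Bl 0 k) := by
    ext t
    simp only [Bl, Set.mem_setOf_eq, Set.mem_preimage]
    rw [sub_zero]
    constructor <;> intro h <;> [rwa [show -x + t = t - x by ring]; rwa [show t - x = -x + t by ring]]
  rw [h, measure_preimage_add]

lemma measure_Bl (hm : m {t : ℚ_[p] | ‖t‖ ≤ 1} = 1) (x : ℚ_[p]) (k : ℕ) :
    m (Bl x k) = ((p:ℝ≥0∞))⁻¹ ^ k := by
  rw [measure_Bl_translate]
  induction k with
  | zero => rw [Bl_zero_zero]; simpa using hm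
  | succ k ih =>
    have hp0' : (p:ℝ≥0∞) ≠ 0 := by exact_mod_cast hp.out.ne_zero
    have hpt : (p:ℝ≥0∞) ≠ ⊤ := ENNReal.natCast_ne_top p
    have hsum : m (Bl (0:ℚ_[p]) k) = ∑ j ∈ range (p^1),
        m (Bl ((0:ℚ_[p]) + (j:ℚ_[p]) * (p:ℚ_[p])^k) (k+1)) := by
      rw [Bl_eq (0:ℚ_[p]) k 1]
      exact measure_biUnion_finset (Bl_disj 0 k 1) (fun j _ => measurableSet_Bl)
    have hconst : ∀ j ∈ range (p^1),
        m (Bl ((0:ℚ_[p]) + (j:ℚ_[p]) * (p:ℚ_[p])^k) (k+1)) = m (Bl (0:ℚ_[p]) (k+1)) :=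
      fun j _ => measure_Bl_translate m _ _
    rw [Finset.sum_congr rfl hconst, Finset.sum_const, Finset.card_range, pow_one, ih] at hsum
    have : m (Bl (0:ℚ_[p]) (k+1)) = (p:ℝ≥0∞)⁻¹ * ((p:ℝ≥0∞) * m (Bl (0:ℚ_[p]) (k+1))) := by
      rw [← mul_assoc, ENNReal.inv_mul_cancel hp0' hpt, one_mul]
    rw [this, ← nsmul_eq_mul, ← hsum, pow_succ, mul_comm]

lemma measure_Bl_ne_top (hm : m {t : ℚ_[p] | ‖t‖ ≤ 1} = 1) (x : ℚ_[p]) (k : ℕ) :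
    m (Bl x k) ≠ ⊤ := by
  rw [measure_Bl m hm]
  exact ENNReal.pow_ne_top (ENNReal.inv_ne_top.2 (by exact_mod_cast hp.out.ne_zero))

lemma measure_Bl_toReal (hm : m {t : ℚ_[p] | ‖t‖ ≤ 1} = 1) (x : ℚ_[p]) (k : ℕ) :
    (m (Bl x k)).toReal = (p:ℝ)^(-(k:ℤ)) := by
  rw [measure_Bl m hm, ENNReal.toReal_pow, ENNReal.toReal_inv]
  simp only [ENNReal.toReal_natCast]
  rw [← zpow_natCast ((p:ℝ)⁻¹), inv_zpow, ← zpow_neg]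

lemma integrableOn_Bl (hm : m {t : ℚ_[p] | ‖t‖ ≤ 1} = 1) (f : ℚ_[p] → ℂ)
    (hf : Continuous f) (hb : ∀ t, ‖f t‖ ≤ 1) (x : ℚ_[p]) (k : ℕ) :
    IntegrableOn f (Bl x k) m :=
  Measure.integrableOn_of_bounded (measure_Bl_ne_top m hm x k)
    hf.aestronglyMeasurable (ae_of_all _ hb)

lemma shift_integral (f : ℚ_[p] → ℂ) (x : ℚ_[p]) (k : ℕ) (s : ℚ_[p])
    (hs : ‖s‖ ≤ (p:ℝ)^(-(k:ℤ))) :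
    ∫ t in Bl x k, f (t + s) ∂m = ∫ t in Bl x k, f t ∂m := by
  have h := (measurePreserving_add_right m s).setIntegral_preimage_emb
    (measurableEmbedding_addRight s) f (Bl x k)
  have hpre : (· + s) ⁻¹' (Bl x k) = Bl x k := by
    ext t
    simp only [Set.mem_preimage, mem_Bl]
    constructor
    · intro h1
      have heq : t - x = (t + s - x) + (-s) := by ring
      rw [heq]
      refine le_trans (Padic.nonarchimedean _ _) (max_le h1 ?_)
      rwa [norm_neg]
    · intro h1
      have heq : t + s - x = (t - x) + s := by ring
      rw [heq]
      exact le_trans (Padic.nonarchimedean _ _) (max_le h1 hs)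
  rwa [hpre] at h

end Meas

section Char

variable (e : AddChar ℚ_[p] ℂ) (he1 : ∀ t : ℚ_[p], ‖t‖ ≤ 1 → e t = 1)

include he1

lemma e_congr {u v : ℚ_[p]} (h : ‖u - v‖ ≤ 1) : e u = e v := by
  have hv : v + (u - v) = u := by ring
  rw [← hv, AddChar.map_add_eq_mul, he1 _ h, mul_one]

lemma e_abs (z : ℚ_[p]) : ‖e z‖ = 1 := by
  obtain ⟨N, hN⟩ := pow_unbounded_of_one_lt ‖z‖ (hp1R (p:=p))
  have h1 : ‖(p:ℚ_[p])^N * z‖ ≤ 1 := by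
    rw [norm_mul, Padic.norm_p_pow]
    calc (p:ℝ)^(-(N:ℤ)) * ‖z‖ ≤ (p:ℝ)^(-(N:ℤ)) * (p:ℝ)^(N:ℤ) := by
          apply mul_le_mul_of_nonneg_left _ (le_of_lt (zpow_pos hp0R _))
          rw [zpow_natCast]; exact le_of_lt hN
      _ = 1 := by rw [← zpow_add₀ (ne_of_gt hp0R)]; simp
  have h2 : e z ^ (p^N) = 1 := by
    rw [← AddChar.map_nsmul_eq_pow, nsmul_eq_mul]
    apply he1
    rwa [show ((p^N : ℕ) : ℚ_[p]) * z = (p:ℚ_[p])^N * z by push_cast; ring]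
  have h3 : ‖e z‖ ^ (p^N) = 1 := by
    rw [← norm_pow, h2, norm_one]
  have hnn : 0 ≤ ‖e z‖ := norm_nonneg _
  have hne : p^N ≠ 0 := pow_ne_zero _ hp.out.ne_zero
  rcases lt_trichotomy (‖e z‖) 1 with h | h | h
  · exfalso
    have := pow_lt_one₀ hnn h hne
    rw [h3] at this; exact lt_irrefl _ this
  · exact h
  · exfalso
    have := one_lt_pow₀ h hne
    rw [h3] at this; exact lt_irrefl _ this

lemma e_ne_zero (z : ℚ_[p]) : e z ≠ 0 := by
  intro h
  have := e_abs e he1 z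
  rw [h, norm_zero] at this
  norm_num at this

lemma e_conj (z : ℚ_[p]) : (starRingEnd ℂ) (e z) = e (-z) := by
  have h1 : e z * e (-z) = 1 := by
    rw [← AddChar.map_add_eq_mul, add_neg_cancel, AddChar.map_zero_eq_one]
  have h2 : e z * (starRingEnd ℂ) (e z) = 1 := by
    rw [Complex.mul_conj]
    rw [Complex.normSq_eq_norm_sq, e_abs e he1]
    norm_num
  rw [eq_inv_of_mul_eq_one_right h2, eq_inv_of_mul_eq_one_right h1]

lemma e_continuous : Continuous e := by
  rw [continuous_iff_continuousAt]
  intro x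
  have hev : (fun _ => e x) =ᶠ[nhds x] e := by
    have hball : Metric.closedBall x 1 ∈ nhds x := Metric.closedBall_mem_nhds x one_pos
    filter_upwards [hball] with y hy
    exact (e_congr e he1 (by simpa [dist_eq_norm] using hy)).symm
  exact Filter.Tendsto.congr' hev tendsto_const_nhds

end Char

section Main

variable [MeasurableSpace ℚ_[p]] [BorelSpace ℚ_[p]]
variable (m : Measure ℚ_[p]) [m.IsAddLeftInvariant]
variable (e : AddChar ℚ_[p] ℂ) (he1 : ∀ t : ℚ_[p], ‖t‖ ≤ 1 → e t = 1)

include he1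

omit he1 in
lemma integral_const_on (hm : m {t : ℚ_[p] | ‖t‖ ≤ 1} = 1) (f : ℚ_[p] → ℂ) (x : ℚ_[p]) (k : ℕ)
    (c : ℂ) (h : ∀ t ∈ Bl x k, f t = c) :
    ∫ t in Bl x k, f t ∂m = ((p:ℝ)^(-(k:ℤ))) • c := by
  rw [setIntegral_congr_fun measurableSet_Bl h, setIntegral_const, measureReal_def, measure_Bl_toReal m hm]

lemma vanish (b x : ℚ_[p]) (k : ℕ) (s : ℚ_[p])
    (hs : ‖s‖ ≤ (p:ℝ)^(-(k:ℤ)))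
    (h1 : ‖b * s * s‖ ≤ 1)
    (h2 : ∀ r : ℚ_[p], ‖r - x‖ ≤ (p:ℝ)^(-(k:ℤ)) → ‖2 * b * (r - x) * s‖ ≤ 1)
    (h3 : e (2 * b * x * s) ≠ 1) :
    ∫ t in Bl x k, e (b * t^2) ∂m = 0 := by
  have key : ∀ t ∈ Bl x k, e (b * (t+s)^2) = e (2*b*x*s) * e (b*t^2) := by
    intro t ht
    have harg : b*(t+s)^2 = (2*b*x*s) + (b*t^2 + (2*b*(t-x)*s + b*s*s)) := by ring
    rw [harg, AddChar.map_add_eq_mul, AddChar.map_add_eq_mul]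
    have hsmall : e (2*b*(t-x)*s + b*s*s) = 1 := by
      apply he1
      exact le_trans (Padic.nonarchimedean _ _) (max_le (h2 _ ht) h1)
    rw [hsmall, mul_one]
  have hmul : (∫ t in Bl x k, e (b * t^2) ∂m)
      = e (2*b*x*s) * ∫ t in Bl x k, e (b * t^2) ∂m :=
    calc (∫ t in Bl x k, e (b * t^2) ∂m)
        = ∫ t in Bl x k, e (b * (t+s)^2) ∂m :=
          (shift_integral m (fun t => e (b*t^2)) x k s hs).symm
      _ = ∫ t in Bl x k, e (2*b*x*s) * e (b * t^2) ∂m :=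
          setIntegral_congr_fun measurableSet_Bl key
      _ = e (2*b*x*s) * ∫ t in Bl x k, e (b * t^2) ∂m := integral_const_mul _ _
  have hfac : (e (2*b*x*s) - 1) * ∫ t in Bl x k, e (b * t^2) ∂m = 0 := by
    rw [sub_mul, one_mul, ← hmul, sub_self]
  rcases mul_eq_zero.1 hfac with h | h
  · exact absurd (sub_eq_zero.1 h) h3
  · exact h

omit he1 in
lemma integral_Bl_sum (hm : m {t : ℚ_[p] | ‖t‖ ≤ 1} = 1) (f : ℚ_[p] → ℂ)
    (hf : Continuous f) (hb : ∀ t, ‖f t‖ ≤ 1) (x : ℚ_[p]) (k d : ℕ) :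
    ∫ t in Bl x k, f t ∂m
      = ∑ j ∈ range (p^d), ∫ t in Bl (x + (j:ℚ_[p]) * (p:ℚ_[p])^k) (k+d), f t ∂m := by
  conv_lhs => rw [Bl_eq x k d]
  exact integral_biUnion_finset _ (fun j _ => measurableSet_Bl) (Bl_disj x k d)
    (fun j _ => integrableOn_Bl m hm f hf hb _ _)

lemma exists_t0 (he2 : ∃ t : ℚ_[p], ‖t‖ ≤ p ∧ e t ≠ 1) :
    ∃ t₀ : ℚ_[p], ‖t₀‖ = (p:ℝ) ∧ e t₀ ≠ 1 := by
  obtain ⟨t, htp, hte⟩ := he2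
  refine ⟨t, ?_, hte⟩
  have hgt : ¬ (‖t‖ ≤ 1) := fun h => hte (he1 t h)
  have h0 : ¬ (‖t‖ ≤ (p:ℝ)^(0:ℤ)) := by rwa [zpow_zero]
  have := Padic.norm_le_pow_iff_norm_lt_pow_add_one t 0
  rw [zero_add] at this
  have hge : (p:ℝ)^(1:ℤ) ≤ ‖t‖ := not_lt.1 (fun hlt => h0 (this.2 hlt))
  rw [zpow_one] at hge
  exact le_antisymm htp hge

lemma e_ne_one (he2 : ∃ t : ℚ_[p], ‖t‖ ≤ p ∧ e t ≠ 1)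
    (x : ℚ_[p]) (hx : ‖x‖ = (p:ℝ)) : e x ≠ 1 := by
  intro hex
  obtain ⟨t₀, ht0n, ht0⟩ := exists_t0 e he1 he2
  have hx0 : x ≠ 0 := by
    intro h; rw [h, norm_zero] at hx; exact absurd hx.symm (ne_of_gt hp0R)
  have hy1 : ‖t₀ / x‖ ≤ 1 := by
    rw [norm_div, hx, ht0n, div_self (ne_of_gt hp0R)]
  set z : ℤ_[p] := ⟨t₀ / x, hy1⟩ with hz
  set c := z.appr 1 with hc
  have hzc : ‖t₀ / x - (c:ℚ_[p])‖ ≤ (p:ℝ)^(-(1:ℕ):ℤ) := by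
    have h := (PadicInt.norm_le_pow_iff_mem_span_pow (z - ((c:ℕ) : ℤ_[p])) 1).2
      (PadicInt.appr_spec 1 z)
    have heq : ((z - ((c:ℕ) : ℤ_[p]) : ℤ_[p]) : ℚ_[p]) = t₀ / x - (c:ℚ_[p]) := by
      exact rfl
    rwa [PadicInt.norm_def, heq] at h
  have hrem : ‖t₀ - (c:ℚ_[p]) * x‖ ≤ 1 := by
    have heq : t₀ - (c:ℚ_[p]) * x = (t₀ / x - (c:ℚ_[p])) * x := by field_simp
    rw [heq, norm_mul, hx]
    calc ‖t₀ / x - (c:ℚ_[p])‖ * (p:ℝ) ≤ (p:ℝ)^(-(1:ℕ):ℤ) * (p:ℝ) := by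
          exact mul_le_mul_of_nonneg_right hzc (le_of_lt hp0R)
      _ = 1 := by
          rw [show (-(1:ℕ):ℤ) = (-1 : ℤ) by norm_num, zpow_neg_one]
          exact inv_mul_cancel₀ (ne_of_gt hp0R)
  have : e t₀ = 1 := by
    have harg : t₀ = (c:ℚ_[p]) * x + (t₀ - (c:ℚ_[p]) * x) := by ring
    rw [harg, AddChar.map_add_eq_mul, he1 _ hrem, mul_one,
      show ((c:ℕ):ℚ_[p]) * x = (c:ℕ) • x from (nsmul_eq_mul _ _).symm,
      AddChar.map_nsmul_eq_pow, hex, one_pow]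
  exact ht0 this

omit he1 in
lemma norm_two (hodd : Odd p) : ‖(2:ℚ_[p])‖ = 1 := by
  have hne2 : p ≠ 2 := by
    intro h; subst h; simp [Nat.odd_iff] at hodd
  have h2 : ¬ ((p:ℤ) ∣ (2:ℤ)) := by
    intro h
    have := Int.le_of_dvd (by norm_num) h
    have h2le := hp.out.two_le
    omega
  have hlt := Padic.norm_intCast_lt_one_iff (p := p) (k := (2:ℤ))
  have hle := Padic.norm_int_le_one (p := p) (2:ℤ)
  have : ¬ (‖((2:ℤ):ℚ_[p])‖ < 1) := fun h => h2 (hlt.1 h)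
  have heq : ‖((2:ℤ):ℚ_[p])‖ = 1 := le_antisymm hle (not_lt.1 this)
  simpa using heq

set_option maxHeartbeats 1000000 in
lemma gauss_abs (hodd : Odd p) (he2 : ∃ t : ℚ_[p], ‖t‖ ≤ p ∧ e t ≠ 1)
    (c : ℚ_[p]) (hc : ‖c‖ = (p:ℝ)) :
    ‖∑ j ∈ Finset.range p, e (c * (j:ℚ_[p])^2)‖ = Real.sqrt p := by
  haveI hf1 : Fact (1 < p) := ⟨hp.out.one_lt⟩
  haveI : NeZero p := ⟨hp.out.ne_zero⟩
  have hp2 : 2 < p := by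
    have h2 := hp.out.two_le
    rcases lt_or_eq_of_le h2 with h | h
    · exact h
    · exfalso; rw [← h] at hodd; simp [Nat.odd_iff] at hodd
  -- congruence tool
  have hcong : ∀ u v : ℤ, (p:ℤ) ∣ (u - v) → e (c * (u:ℚ_[p])) = e (c * (v:ℚ_[p])) := by
    intro u v hdvd
    obtain ⟨w, hw⟩ := hdvd
    apply e_congr e he1
    have hq : ((u:ℚ_[p]) - (v:ℚ_[p])) = (p:ℚ_[p]) * ((w:ℤ):ℚ_[p]) := by exact_mod_cast hw
    have heq : c * (u:ℚ_[p]) - c * (v:ℚ_[p]) = (c * (p:ℚ_[p])) * ((w:ℤ):ℚ_[p]) := by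
      calc c * (u:ℚ_[p]) - c * (v:ℚ_[p]) = c * ((u:ℚ_[p]) - (v:ℚ_[p])) := by ring
        _ = c * ((p:ℚ_[p]) * ((w:ℤ):ℚ_[p])) := by rw [hq]
        _ = (c * (p:ℚ_[p])) * ((w:ℤ):ℚ_[p]) := by ring
    rw [heq, norm_mul, norm_mul, hc, Padic.norm_p]
    calc (p:ℝ) * (p:ℝ)⁻¹ * ‖((w:ℤ):ℚ_[p])‖ ≤ (p:ℝ) * (p:ℝ)⁻¹ * 1 := by
          apply mul_le_mul_of_nonneg_left (Padic.norm_int_le_one w)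
          positivity
      _ = 1 := by field_simp
  have hcongN : ∀ u v : ℕ, u % p = v % p → e (c * (u:ℚ_[p])) = e (c * (v:ℚ_[p])) := by
    intro u v h
    have : (p:ℤ) ∣ ((u:ℤ) - (v:ℤ)) := by
      have := Nat.ModEq.dvd (Nat.ModEq.symm h)
      exact_mod_cast this
    exact hcong _ _ this
  set ψ : ZMod p → ℂ := fun x => e (c * ((x.val : ℕ) : ℚ_[p])) with hψ
  have ψ_add : ∀ x y : ZMod p, ψ (x + y) = ψ x * ψ y := by
    intro x y
    rw [hψ]
    simp only
    rw [ZMod.val_add]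
    rw [hcongN ((x.val + y.val) % p) (x.val + y.val) (Nat.mod_mod_of_dvd _ dvd_rfl)]
    push_cast
    rw [mul_add, AddChar.map_add_eq_mul]
  have ψ_zero : ψ 0 = 1 := by
    rw [hψ]; simp only [ZMod.val_zero]
    push_cast
    rw [mul_zero, AddChar.map_zero_eq_one]
  have ψ_sq : ∀ x : ZMod p, ψ (x * x) = e (c * ((x.val : ℕ) : ℚ_[p])^2) := by
    intro x
    rw [hψ]
    simp only
    rw [ZMod.val_mul, hcongN _ (x.val * x.val) (Nat.mod_mod_of_dvd _ dvd_rfl)]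
    push_cast
    ring_nf
  have ψ_conj : ∀ x : ZMod p, (starRingEnd ℂ) (ψ x) = ψ (-x) := by
    intro x
    rw [hψ]
    simp only
    rw [e_conj e he1]
    have hdvd : (p:ℤ) ∣ (-(x.val : ℤ) - ((-x).val : ℤ)) := by
      have h0 : (((x.val + (-x).val : ℕ) : ZMod p)) = 0 := by
        push_cast [ZMod.natCast_zmod_val]
        ring
      have := (ZMod.natCast_eq_zero_iff _ p).1 h0
      obtain ⟨w, hw⟩ := this
      refine ⟨-w, ?_⟩
      have hwz : (x.val:ℤ) + ((-x).val:ℤ) = (p:ℤ) * w := by exact_mod_cast hw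
      linarith
    have := hcong (-(x.val : ℤ)) ((-x).val : ℤ) hdvd
    push_cast at this
    rw [← this]
    congr 1; ring
  have ψ_one_ne : ψ 1 ≠ 1 := by
    rw [hψ]
    simp only [ZMod.val_one]
    rw [Nat.cast_one, mul_one]
    exact e_ne_one e he1 he2 c hc
  have hsum0 : ∑ x : ZMod p, ψ x = 0 := by
    have h := Fintype.sum_equiv (Equiv.addLeft (1 : ZMod p)) (fun x => ψ (1 + x)) ψ
      (fun x => by rw [Equiv.coe_addLeft])
    have h2 : ∑ x : ZMod p, ψ (1 + x) = ψ 1 * ∑ x : ZMod p, ψ x := by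
      rw [Finset.mul_sum]
      exact Finset.sum_congr rfl (fun x _ => ψ_add 1 x)
    have h3 : (ψ 1 - 1) * ∑ x : ZMod p, ψ x = 0 := by
      rw [sub_mul, one_mul, ← h2, h, sub_self]
    rcases mul_eq_zero.1 h3 with h4 | h4
    · exact absurd (sub_eq_zero.1 h4) ψ_one_ne
    · exact h4
  have hsum_mul : ∀ d : ZMod p, d ≠ 0 → ∑ x : ZMod p, ψ (d * x) = 0 := by
    intro d hd
    have h := Fintype.sum_equiv (Equiv.mulLeft₀ d hd) (fun x => ψ (d * x)) ψ
      (fun x => by rw [Equiv.mulLeft₀_apply])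
    rw [h, hsum0]
  set S := ∑ x : ZMod p, ψ (x * x) with hS
  have hSconj : (starRingEnd ℂ) S = ∑ y : ZMod p, ψ (-(y * y)) := by
    rw [hS, map_sum]
    exact Finset.sum_congr rfl (fun y _ => ψ_conj _)
  have htwo : (2 : ZMod p) ≠ 0 := by
    have : ((2:ℕ) : ZMod p) ≠ 0 := by
      rw [Ne, ZMod.natCast_eq_zero_iff]
      intro h
      have := Nat.le_of_dvd (by norm_num) h
      omega
    simpa using this
  have key : S * (starRingEnd ℂ) S = (p:ℂ) := by
    rw [hSconj, hS, Finset.sum_mul_sum]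
    have step1 : ∀ x y : ZMod p, ψ (x * x) * ψ (-(y * y)) = ψ (x * x - y * y) := by
      intro x y
      rw [← ψ_add]
      congr 1; ring
    calc (∑ x : ZMod p, ∑ y : ZMod p, ψ (x*x) * ψ (-(y*y)))
        = ∑ x : ZMod p, ∑ y : ZMod p, ψ (x*x - y*y) := by
          exact Finset.sum_congr rfl fun x _ => Finset.sum_congr rfl fun y _ => step1 x y
      _ = ∑ y : ZMod p, ∑ x : ZMod p, ψ (x*x - y*y) := Finset.sum_comm
      _ = ∑ y : ZMod p, ∑ d : ZMod p, ψ (d*d + (2*d)*y) := by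
          refine Finset.sum_congr rfl fun y _ => ?_
          have h := Fintype.sum_equiv (Equiv.addLeft y)
            (fun d => ψ ((y + d)*(y + d) - y*y)) (fun x => ψ (x*x - y*y))
            (fun d => by rw [Equiv.coe_addLeft])
          rw [← h]
          refine Finset.sum_congr rfl fun d _ => ?_
          congr 1; ring
      _ = ∑ d : ZMod p, ∑ y : ZMod p, ψ (d*d) * ψ ((2*d)*y) := by
          rw [Finset.sum_comm]
          exact Finset.sum_congr rfl fun d _ => Finset.sum_congr rfl fun y _ => ψ_add _ _
      _ = ∑ d : ZMod p, ψ (d*d) * ∑ y : ZMod p, ψ ((2*d)*y) := by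
          exact Finset.sum_congr rfl fun d _ => (Finset.mul_sum _ _ _).symm
      _ = (p:ℂ) := by
          rw [Finset.sum_eq_single 0]
          · have hz : ∀ y : ZMod p, ψ (2*0*y) = 1 := fun y => by
              rw [show (2:ZMod p)*0*y = 0 by ring, ψ_zero]
            rw [show (0:ZMod p)*0 = 0 by ring, ψ_zero, one_mul,
              Finset.sum_congr rfl (fun y _ => hz y), Finset.sum_const, Finset.card_univ,
              ZMod.card]
            simp
          · intro d _ hd
            rw [hsum_mul (2*d) (mul_ne_zero htwo hd), mul_zero]
          · intro h; exact absurd (Finset.mem_univ 0) h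
  have hnormSq : Complex.normSq S = (p:ℝ) := by
    have := Complex.mul_conj S
    rw [key] at this
    exact_mod_cast this.symm
  have habs : ‖S‖ = Real.sqrt p := by
    rw [Complex.norm_def, hnormSq]
  rw [← habs]
  congr 1
  rw [hS]
  refine Finset.sum_nbij' (fun j => (j : ZMod p)) (fun x => x.val) ?_ ?_ ?_ ?_ ?_
  · intro a _; exact Finset.mem_univ _
  · intro x _; exact Finset.mem_range.2 (ZMod.val_lt x)
  · intro a ha; exact ZMod.val_cast_of_lt (Finset.mem_range.1 ha)
  · intro x _; exact ZMod.natCast_zmod_val x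
  · intro a _
    calc e (c * (a:ℚ_[p])^2)
        = e (c * ((a*a : ℕ):ℚ_[p])) := by
          rw [show ((a*a:ℕ):ℚ_[p]) = (a:ℚ_[p])^2 by push_cast; ring]
      _ = e (c * (((a%p)*(a%p) : ℕ):ℚ_[p])) :=
          hcongN _ _ (by rw [Nat.mul_mod])
      _ = e (c * (((a%p) : ℕ):ℚ_[p])^2) := by
          rw [show (((a%p)*(a%p):ℕ):ℚ_[p]) = (((a%p):ℕ):ℚ_[p])^2 by push_cast; ring]
      _ = ψ ((a : ZMod p) * (a : ZMod p)) := by rw [ψ_sq, ZMod.val_natCast]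

omit he1 in
lemma zpmul (u v : ℤ) : (p:ℝ)^u * (p:ℝ)^v = (p:ℝ)^(u+v) :=
  (zpow_add₀ (ne_of_gt (hp0R (p := p))) u v).symm

omit he1 in
lemma zple_one {u : ℤ} (h : u ≤ 0) : (p:ℝ)^u ≤ 1 :=
  calc (p:ℝ)^u ≤ (p:ℝ)^(0:ℤ) := zpowle.2 h
    _ = 1 := zpow_zero _

omit he1 in
lemma zpnonneg (u : ℤ) : (0:ℝ) ≤ (p:ℝ)^u := (zpow_pos (hp0R (p := p)) u).le

omit he1 in
lemma Stmt12.norm_mul_le_of_le {x y : ℚ_[p]} {A B : ℝ} (hx : ‖x‖ ≤ A) (hy : ‖y‖ ≤ B) :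
    ‖x * y‖ ≤ A * B := by
  rw [norm_mul]
  exact mul_le_mul hx hy (norm_nonneg _) (le_trans (norm_nonneg _) hx)

lemma coset_vanish (hodd : Odd p) (he2 : ∃ t : ℚ_[p], ‖t‖ ≤ p ∧ e t ≠ 1)
    (b : ℚ_[p]) (n : ℤ) (hbn : ‖b‖ = (p:ℝ)^n)
    (d : ℕ) (hd : 2*(d:ℤ) ≤ n) (j : ℕ) (hjlt : j < p^d) (hj0 : j ≠ 0) :
    ∫ t in Bl (j:ℚ_[p]) d, e (b * t^2) ∂m = 0 := by
  obtain ⟨t₀, ht0n, ht0⟩ := exists_t0 e he1 he2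
  have hb0 : b ≠ 0 := by
    intro h; rw [h, norm_zero] at hbn
    exact absurd hbn.symm (ne_of_gt (zpow_pos hp0R n))
  have hj0' : (j:ℚ_[p]) ≠ 0 := Nat.cast_ne_zero.2 hj0
  set v : ℤ := (j:ℚ_[p]).valuation with hv
  have hjn : ‖(j:ℚ_[p])‖ = (p:ℝ)^(-v) := Padic.norm_eq_zpow_neg_valuation hj0'
  have hv0 : 0 ≤ v := by
    have h1 : ‖(j:ℚ_[p])‖ ≤ (p:ℝ)^(0:ℤ) := by rw [zpow_zero]; exact norm_nat_le_one j
    rw [hjn] at h1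
    have := zpowle.1 h1
    omega
  have hvd : v ≤ (d:ℤ) - 1 := by
    by_contra hcon
    push_neg at hcon
    have h1 : ‖(j:ℚ_[p])‖ ≤ (p:ℝ)^(-(d:ℤ)) := by
      rw [hjn]; exact zpowle.2 (by omega)
    have h2 : ((p:ℤ)^d) ∣ ((j:ℕ):ℤ) := by
      have := (Padic.norm_int_le_pow_iff_dvd ((j:ℕ):ℤ) d).1 (by
        rwa [show (((j:ℕ):ℤ):ℚ_[p]) = ((j:ℕ):ℚ_[p]) by push_cast; ring])
      exact_mod_cast this
    have h3 : (p^d : ℕ) ∣ j := by exact_mod_cast h2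
    have := Nat.le_of_dvd (Nat.pos_of_ne_zero hj0) h3
    omega
  have h2ne : (2:ℚ_[p]) ≠ 0 := two_ne_zero
  have h2bj0 : 2*b*(j:ℚ_[p]) ≠ 0 := mul_ne_zero (mul_ne_zero h2ne hb0) hj0'
  have h2bj : ‖2*b*(j:ℚ_[p])‖ = (p:ℝ)^(n + -v) := by
    rw [norm_mul, norm_mul, norm_two hodd, one_mul, hbn, hjn, zpmul]
  set s := t₀ / (2*b*(j:ℚ_[p])) with hs
  have hsn : ‖s‖ = (p:ℝ)^(1 - n + v) := by
    have hdiv : (p:ℝ)^(1 - n + v) = (p:ℝ)^(1:ℤ) / (p:ℝ)^(n + -v) := by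
      rw [← zpow_sub₀ (ne_of_gt hp0R)]; congr 1; ring
    rw [hs, norm_div, ht0n, h2bj, hdiv, zpow_one]
  apply vanish m e he1 b (j:ℚ_[p]) d s
  · rw [hsn]; exact zpowle.2 (by omega)
  · calc ‖b * s * s‖ = (p:ℝ)^(n + (1-n+v) + (1-n+v)) := by
          rw [norm_mul, norm_mul, hbn, hsn, zpmul, zpmul]
      _ ≤ 1 := zple_one (by omega)
  · intro r hr
    have heq : 2*b*(r - (j:ℚ_[p]))*s = (b*s) * (2*(r - (j:ℚ_[p]))) := by ring
    rw [heq]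
    have h1 : ‖b * s‖ ≤ (p:ℝ)^(n + (1-n+v)) := by
      rw [norm_mul, hbn, hsn, zpmul]
    have h2 : ‖2*(r - (j:ℚ_[p]))‖ ≤ (p:ℝ)^(-(d:ℤ)) := by
      rw [norm_mul, norm_two hodd, one_mul]; exact hr
    calc ‖b*s * (2*(r - (j:ℚ_[p])))‖ ≤ (p:ℝ)^(n + (1-n+v)) * (p:ℝ)^(-(d:ℤ)) :=
          Stmt12.norm_mul_le_of_le h1 h2
      _ = (p:ℝ)^((n + (1-n+v)) + -(d:ℤ)) := zpmul _ _
      _ ≤ 1 := zple_one (by omega)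
  · have heq : 2*b*(j:ℚ_[p])*s = t₀ := by
      rw [hs, mul_div_cancel₀ _ h2bj0]
    rw [heq]; exact ht0

set_option maxHeartbeats 1000000 in
lemma g_abs (hm : m {t : ℚ_[p] | ‖t‖ ≤ 1} = 1) (hodd : Odd p)
    (he2 : ∃ t : ℚ_[p], ‖t‖ ≤ p ∧ e t ≠ 1)
    (b : ℚ_[p]) (N : ℕ) (hN : 1 ≤ N) (hbn : ‖b‖ = (p:ℝ)^(N:ℤ)) :
    ‖∫ t in Bl (0:ℚ_[p]) 0, e (b * t^2) ∂m‖
      = ((p:ℝ)^(N:ℤ))^(-(1/2) : ℝ) := by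
  have hq0 : (0:ℝ) ≤ (p:ℝ) := le_of_lt hp0R
  have hcont : Continuous (fun t : ℚ_[p] => e (b*t^2)) :=
    (e_continuous e he1).comp (continuous_const.mul (continuous_pow 2))
  have hbd : ∀ t : ℚ_[p], ‖e (b*t^2)‖ ≤ 1 := fun t => by
    rw [e_abs e he1]
  have hkey : ∀ d : ℕ, 2*(d:ℤ) ≤ (N:ℤ) →
      (∫ t in Bl (0:ℚ_[p]) 0, e (b*t^2) ∂m) = ∫ t in Bl (0:ℚ_[p]) d, e (b*t^2) ∂m := by
    intro d hd
    rw [integral_Bl_sum m hm _ hcont hbd 0 0 d]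
    calc (∑ j ∈ range (p^d), ∫ t in Bl ((0:ℚ_[p]) + (j:ℚ_[p]) * (p:ℚ_[p])^(0:ℕ)) (0+d),
            e (b*t^2) ∂m)
        = ∑ j ∈ range (p^d), ∫ t in Bl ((j:ℚ_[p])) d, e (b*t^2) ∂m := by
          refine Finset.sum_congr rfl fun j _ => ?_
          norm_num
      _ = ∫ t in Bl (((0:ℕ)):ℚ_[p]) d, e (b*t^2) ∂m := by
          refine Finset.sum_eq_single_of_mem 0 (mem_range.2 (pow_pos hp.out.pos d)) ?_
          intro j hj hj0
          exact coset_vanish m e he1 hodd he2 b (N:ℤ) hbn d hd j (mem_range.1 hj) hj0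
      _ = ∫ t in Bl (0:ℚ_[p]) d, e (b*t^2) ∂m := by norm_num
  rcases Nat.even_or_odd N with ⟨k, hk⟩ | ⟨k, hk⟩
  · -- even case : N = k + k
    have hk1 : 1 ≤ k := by omega
    rw [hkey k (by omega)]
    have hone : ∀ t ∈ Bl (0:ℚ_[p]) k, e (b*t^2) = 1 := by
      intro t ht
      apply he1
      rw [mem_Bl, sub_zero] at ht
      have h1 : ‖t^2‖ ≤ (p:ℝ)^(-(k:ℤ)) * (p:ℝ)^(-(k:ℤ)) := by
        rw [pow_two]; exact Stmt12.norm_mul_le_of_le ht ht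
      calc ‖b * t^2‖ ≤ (p:ℝ)^(N:ℤ) * ((p:ℝ)^(-(k:ℤ)) * (p:ℝ)^(-(k:ℤ))) :=
            Stmt12.norm_mul_le_of_le (le_of_eq hbn) h1
        _ = (p:ℝ)^((N:ℤ) + (-(k:ℤ) + -(k:ℤ))) := by rw [zpmul, zpmul]
        _ ≤ 1 := zple_one (by omega)
    rw [integral_const_on m hm _ 0 k 1 hone]
    rw [Complex.real_smul, mul_one, Complex.norm_real, Real.norm_eq_abs,
      abs_of_pos (zpow_pos hp0R _)]
    have hNr : (N:ℝ) = (k:ℝ) + (k:ℝ) := by exact_mod_cast congrArg (fun x : ℕ => (x:ℝ)) hk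
    rw [← Real.rpow_intCast (p:ℝ) (N:ℤ), ← Real.rpow_mul hq0,
      ← Real.rpow_intCast (p:ℝ) (-(k:ℤ))]
    congr 1
    push_cast
    linarith
  · -- odd case : N = 2k + 1
    rw [hkey k (by omega)]
    rw [integral_Bl_sum m hm _ hcont hbd 0 k 1]
    set cc := b * ((p:ℚ_[p])^k)^2 with hcc
    have hccn : ‖cc‖ = (p:ℝ) := by
      rw [hcc, norm_mul, hbn, norm_pow, Padic.norm_p_pow, pow_two, zpmul, zpmul,
        show (N:ℤ) + (-(k:ℤ) + -(k:ℤ)) = 1 by omega, zpow_one]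
    have hconst : ∀ j : ℕ, ∀ t ∈ Bl ((0:ℚ_[p]) + (j:ℚ_[p]) * (p:ℚ_[p])^k) (k+1),
        e (b*t^2) = e (cc * (j:ℚ_[p])^2) := by
      intro j t ht
      set x := (0:ℚ_[p]) + (j:ℚ_[p]) * (p:ℚ_[p])^k with hx
      apply e_congr e he1
      have hxn : ‖x‖ ≤ (p:ℝ)^(-(k:ℤ)) := by
        rw [hx, zero_add]
        calc ‖(j:ℚ_[p]) * (p:ℚ_[p])^k‖ ≤ 1 * (p:ℝ)^(-(k:ℤ)) :=
              Stmt12.norm_mul_le_of_le (norm_nat_le_one j) (le_of_eq (Padic.norm_p_pow k))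
          _ = _ := one_mul _
      rw [mem_Bl] at ht
      have harg : b*t^2 - cc * (j:ℚ_[p])^2 = b*(t-x)*(t-x) + (2*b*x)*(t-x) := by
        rw [hcc, hx]; ring
      rw [harg]
      refine le_trans (Padic.nonarchimedean _ _) (max_le ?_ ?_)
      · calc ‖b*(t-x)*(t-x)‖
            ≤ ((p:ℝ)^(N:ℤ) * (p:ℝ)^(-((k+1:ℕ)):ℤ)) * (p:ℝ)^(-((k+1:ℕ)):ℤ) :=
              Stmt12.norm_mul_le_of_le (Stmt12.norm_mul_le_of_le (le_of_eq hbn) ht) ht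
          _ = (p:ℝ)^(((N:ℤ) + -((k+1:ℕ))) + -((k+1:ℕ)):ℤ) := by rw [zpmul, zpmul]
          _ ≤ 1 := zple_one (by push_cast; omega)
      · calc ‖2*b*x*(t-x)‖ = ‖b*x*(t-x)‖ := by
              rw [show (2:ℚ_[p])*b*x*(t-x) = 2*(b*x*(t-x)) by ring, norm_mul,
                norm_two hodd, one_mul]
          _ ≤ ((p:ℝ)^(N:ℤ) * (p:ℝ)^(-(k:ℤ))) * (p:ℝ)^(-((k+1:ℕ)):ℤ) :=
              Stmt12.norm_mul_le_of_le (Stmt12.norm_mul_le_of_le (le_of_eq hbn) hxn) ht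
          _ = (p:ℝ)^(((N:ℤ) + -(k:ℤ)) + -((k+1:ℕ)):ℤ) := by rw [zpmul, zpmul]
          _ ≤ 1 := zple_one (by push_cast; omega)
    have hsum : (∑ j ∈ range (p^1), ∫ t in Bl ((0:ℚ_[p]) + (j:ℚ_[p]) * (p:ℚ_[p])^k) (k+1),
          e (b*t^2) ∂m)
        = ((p:ℝ)^(-((k+1:ℕ)):ℤ)) • ∑ j ∈ range p, e (cc * (j:ℚ_[p])^2) := by
      rw [pow_one, Finset.smul_sum]
      exact Finset.sum_congr rfl fun j hj =>
        integral_const_on m hm _ _ (k+1) _ (hconst j)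
    rw [hsum, Complex.real_smul, norm_mul, Complex.norm_real, Real.norm_eq_abs,
      abs_of_pos (zpow_pos hp0R _), gauss_abs e he1 hodd he2 cc hccn]
    -- p^{-(k+1)} * sqrt p = (p^N)^{-1/2}
    have hNr : (N:ℝ) = 2*(k:ℝ) + 1 := by
      have : (N:ℝ) = ((2*k+1 : ℕ):ℝ) := by exact_mod_cast congrArg (fun x : ℕ => (x:ℝ)) hk
      push_cast at this; linarith
    rw [Real.sqrt_eq_rpow, ← Real.rpow_intCast (p:ℝ) (-((k+1:ℕ)):ℤ), ← Real.rpow_add hp0R,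
      ← Real.rpow_intCast (p:ℝ) (N:ℤ), ← Real.rpow_mul hq0]
    congr 1
    push_cast
    linarith

end Main

end Stmt12


open Stmt12 in
set_option maxHeartbeats 1000000 in
theorem stmt_12 (p : ℕ) [Fact p.Prime] (hodd : Odd p)
    [MeasurableSpace ℚ_[p]] [BorelSpace ℚ_[p]]
    (m : Measure ℚ_[p]) [m.IsAddLeftInvariant]
    (hm : m {t : ℚ_[p] | ‖t‖ ≤ 1} = 1)
    (e : AddChar ℚ_[p] ℂ)
    (he1 : ∀ t : ℚ_[p], ‖t‖ ≤ 1 → e t = 1)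
    (he2 : ∃ t : ℚ_[p], ‖t‖ ≤ p ∧ e t ≠ 1)
    (a b : ℚ_[p]) (hab : 1 < max ‖a‖ ‖b‖) :
    (‖a‖ ≤ ‖b‖ →
      ‖∫ t in {t : ℚ_[p] | ‖t‖ ≤ 1}, e (a * t + b * t ^ 2) ∂m‖
        = ‖b‖ ^ (-(1 / 2) : ℝ)) ∧
    (‖b‖ < ‖a‖ →
      (∫ t in {t : ℚ_[p] | ‖t‖ ≤ 1}, e (a * t + b * t ^ 2) ∂m) = 0) := by
  have hset : {t : ℚ_[p] | ‖t‖ ≤ 1} = Bl (0:ℚ_[p]) 0 := Bl_zero_zero.symm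
  constructor
  · intro hle
    have hb1 : (1:ℝ) < ‖b‖ := by
      have := max_le_iff.2 ⟨hle, le_refl ‖b‖⟩
      linarith [hab, this]
    have hb0 : b ≠ 0 := by intro h; rw [h, norm_zero] at hb1; linarith
    have hbnv : ‖b‖ = (p:ℝ)^(-(b.valuation)) := Padic.norm_eq_zpow_neg_valuation hb0
    set n : ℤ := -b.valuation with hn
    have hn1 : 1 ≤ n := by
      by_contra h
      push_neg at h
      have : ‖b‖ ≤ 1 := by rw [hbnv]; exact zple_one (by omega)
      linarith
    set N : ℕ := n.toNat with hN
    have hNn : (N:ℤ) = n := Int.toNat_of_nonneg (by omega)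
    have hbn : ‖b‖ = (p:ℝ)^(N:ℤ) := by rw [hbnv, hNn]
    have hN1 : 1 ≤ N := by omega
    have h2b0 : (2:ℚ_[p]) * b ≠ 0 := mul_ne_zero two_ne_zero hb0
    set c : ℚ_[p] := -(a / (2*b)) with hc
    have hbpos : (0:ℝ) < ‖b‖ := by linarith
    have hcle : ‖c‖ ≤ 1 := by
      rw [hc, norm_neg, norm_div, norm_mul, norm_two hodd, one_mul, div_le_one hbpos]
      exact hle
    have hzero : a + 2*b*c = 0 := by rw [hc]; field_simp; ring
    have hpt : ∀ t : ℚ_[p], e (a*(t+c) + b*(t+c)^2) = e (a*c + b*c^2) * e (b*t^2) := by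
      intro t
      have harg : a*(t+c) + b*(t+c)^2 = (a*c + b*c^2) + (b*t^2 + (a + 2*b*c)*t) := by ring
      rw [harg, AddChar.map_add_eq_mul, AddChar.map_add_eq_mul, hzero, zero_mul, add_zero,
        ← AddChar.map_add_eq_mul]
    have hGg : (∫ t in Bl (0:ℚ_[p]) 0, e (a*t + b*t^2) ∂m)
        = e (a*c + b*c^2) * ∫ t in Bl (0:ℚ_[p]) 0, e (b*t^2) ∂m := by
      calc (∫ t in Bl (0:ℚ_[p]) 0, e (a*t + b*t^2) ∂m)
          = ∫ t in Bl (0:ℚ_[p]) 0, e (a*(t+c) + b*(t+c)^2) ∂m :=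
            (shift_integral m (fun t => e (a*t + b*t^2)) 0 0 c (by simpa using hcle)).symm
        _ = ∫ t in Bl (0:ℚ_[p]) 0, e (a*c + b*c^2) * e (b*t^2) ∂m :=
            setIntegral_congr_fun measurableSet_Bl fun t _ => hpt t
        _ = _ := integral_const_mul _ _
    rw [hset, hGg, norm_mul, e_abs e he1, one_mul, hbn]
    exact g_abs m e he1 hm hodd he2 b N hN1 hbn
  · intro hlt
    have ha1 : (1:ℝ) < ‖a‖ := by
      have := max_eq_left (le_of_lt hlt)
      rwa [this] at hab
    have ha0 : a ≠ 0 := by intro h; rw [h, norm_zero] at ha1; linarith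
    have hanv : ‖a‖ = (p:ℝ)^(-(a.valuation)) := Padic.norm_eq_zpow_neg_valuation ha0
    set μ : ℤ := -a.valuation with hμ
    have hμ1 : 1 ≤ μ := by
      by_contra h
      push_neg at h
      have : ‖a‖ ≤ 1 := by rw [hanv]; exact zple_one (by omega)
      linarith
    have han : ‖a‖ = (p:ℝ)^μ := hanv
    have hble : ‖b‖ ≤ (p:ℝ)^(μ - 1) := by
      rcases eq_or_ne b 0 with rfl | hb0
      · rw [norm_zero]; exact (zpow_pos hp0R _).le
      · have hbnv : ‖b‖ = (p:ℝ)^(-(b.valuation)) := Padic.norm_eq_zpow_neg_valuation hb0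
        rw [hbnv]
        apply zpowle.2
        by_contra h
        push_neg at h
        have : ‖a‖ ≤ ‖b‖ := by rw [han, hbnv]; exact zpowle.2 (by omega)
        linarith
    obtain ⟨t₀, ht0n, ht0⟩ := exists_t0 e he1 he2
    set s := t₀ / a with hs
    have hsn : ‖s‖ = (p:ℝ)^(1 - μ) := by
      have hdiv : (p:ℝ)^((1:ℤ) - μ) = (p:ℝ)^(1:ℤ) / (p:ℝ)^μ := zpow_sub₀ (ne_of_gt hp0R) 1 μ
      rw [hs, norm_div, ht0n, han, hdiv, zpow_one]
    have hpt : ∀ t ∈ Bl (0:ℚ_[p]) 0, e (a*(t+s) + b*(t+s)^2) = e t₀ * e (a*t + b*t^2) := by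
      intro t ht
      rw [mem_Bl, sub_zero] at ht
      norm_num at ht
      have harg : a*(t+s) + b*(t+s)^2 = (a*s) + ((a*t + b*t^2) + (2*b*t*s + b*s*s)) := by ring
      have hsmall : e (2*b*t*s + b*s*s) = 1 := by
        apply he1
        refine le_trans (Padic.nonarchimedean _ _) (max_le ?_ ?_)
        · have heq : 2*b*t*s = (b*s)*(2*t) := by ring
          rw [heq]
          calc ‖(b*s)*(2*t)‖ ≤ ((p:ℝ)^(μ-1) * (p:ℝ)^(1-μ)) * 1 :=
                Stmt12.norm_mul_le_of_le (Stmt12.norm_mul_le_of_le hble (le_of_eq hsn))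
                  (by rw [norm_mul, norm_two hodd, one_mul]; exact ht)
            _ = (p:ℝ)^((μ-1) + (1-μ)) := by rw [zpmul, mul_one]
            _ ≤ 1 := zple_one (by omega)
        · calc ‖b*s*s‖ ≤ ((p:ℝ)^(μ-1) * (p:ℝ)^(1-μ)) * (p:ℝ)^(1-μ) :=
                Stmt12.norm_mul_le_of_le (Stmt12.norm_mul_le_of_le hble (le_of_eq hsn)) (le_of_eq hsn)
            _ = (p:ℝ)^(((μ-1) + (1-μ)) + (1-μ)) := by rw [zpmul, zpmul]
            _ ≤ 1 := zple_one (by omega)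
      have has : a * s = t₀ := by rw [hs, mul_div_cancel₀ _ ha0]
      rw [harg, AddChar.map_add_eq_mul, AddChar.map_add_eq_mul, hsmall, mul_one, has]
    rw [hset]
    have hmul : (∫ t in Bl (0:ℚ_[p]) 0, e (a*t + b*t^2) ∂m)
        = e t₀ * ∫ t in Bl (0:ℚ_[p]) 0, e (a*t + b*t^2) ∂m := by
      calc (∫ t in Bl (0:ℚ_[p]) 0, e (a*t + b*t^2) ∂m)
          = ∫ t in Bl (0:ℚ_[p]) 0, e (a*(t+s) + b*(t+s)^2) ∂m :=
            (shift_integral m (fun t => e (a*t + b*t^2)) 0 0 s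
              (by rw [hsn]; apply zpowle.2; push_cast; omega)).symm
        _ = ∫ t in Bl (0:ℚ_[p]) 0, e t₀ * e (a*t + b*t^2) ∂m :=
            setIntegral_congr_fun measurableSet_Bl hpt
        _ = _ := integral_const_mul _ _
    have hfac : (e t₀ - 1) * (∫ t in Bl (0:ℚ_[p]) 0, e (a*t + b*t^2) ∂m) = 0 := by
      rw [sub_mul, one_mul, ← hmul, sub_self]
    rcases mul_eq_zero.1 hfac with h | h
    · exact absurd (sub_eq_zero.1 h) ht0
    · exact h
end

section
/- Under the hypotheses of the abstract restriction theorem, with T f := f ∗ μ̌ and the decomposition T = T₁ + T₂ given by μ̌₁ = φ_ρ μ̌, μ̌₂ = (1-φ_ρ)μ̌, the low-frequency part satisfies for every Borel E ⊆ G: ‖T₁χ_E‖²_{L²(G)} ≲_{n,a,b} (C₁+C₂)^{2-θ} C₃ A^{2-θ} B^{θ} m(E)^{2/r₀} ρ^{n-a}, where θ = 2(n-a)/(2(n-a)+b) and r₀ = (4(n-a)+2b)/(4(n-a)+b). -/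
open scoped BigOperators

namespace S16

set_option linter.unusedSectionVars false
set_option maxHeartbeats 1000000

variable {G H : Type} [AddCommGroup G] [Fintype G] [DecidableEq G]
  [AddCommGroup H] [Fintype H]

section basic

variable (e : G → H → ℂ)
  (hmul : ∀ (x y : G) (ξ : H), e (x + y) ξ = e x ξ * e y ξ)
  (hmulH : ∀ (x : G) (ξ η : H), e x (ξ + η) = e x ξ * e x η)
  (habs : ∀ (x : G) (ξ : H), ‖e x ξ‖ = 1)
  (horth : ∀ x : G, ∑ ξ : H, e x ξ = if x = 0 then (Fintype.card G : ℂ) else 0)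

section nohorth

include hmul habs

lemma e_ne_zero (x : G) (ξ : H) : e x ξ ≠ 0 := by
  intro h0
  have := habs x ξ
  rw [h0] at this
  simp at this

lemma e_zero (ξ : H) : e 0 ξ = 1 := by
  have h := hmul 0 0 ξ
  rw [add_zero] at h
  exact mul_left_cancel₀ (e_ne_zero e hmul habs 0 ξ) (h.symm.trans (mul_one (e 0 ξ)).symm)

lemma e_neg_mul (x : G) (ξ : H) : e (-x) ξ * e x ξ = 1 := by
  rw [← hmul, neg_add_cancel, e_zero e hmul habs]

lemma star_e (x : G) (ξ : H) : (starRingEnd ℂ) (e x ξ) = e (-x) ξ := by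
  have h1 : (starRingEnd ℂ) (e x ξ) * e x ξ = 1 := by
    rw [mul_comm, Complex.mul_conj, ← Complex.sq_norm, habs]
    norm_num
  exact mul_right_cancel₀ (e_ne_zero e hmul habs x ξ) (h1.trans (e_neg_mul e hmul habs x ξ).symm)

include hmulH in
lemma e_negH (x : G) (ξ : H) : e x (-ξ) = e (-x) ξ := by
  have h0 : e x (0 : H) = 1 := by
    have h := hmulH x 0 0
    rw [add_zero] at h
    exact mul_left_cancel₀ (e_ne_zero e hmul habs x 0)
      (h.symm.trans (mul_one (e x 0)).symm)
  have h1 : e x (-ξ) * e x ξ = 1 := by rw [← hmulH, neg_add_cancel, h0]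
  exact mul_right_cancel₀ (e_ne_zero e hmul habs x ξ)
    (h1.trans (e_neg_mul e hmul habs x ξ).symm)

end nohorth

/-- Fourier transform. -/
noncomputable def Fhat (f : G → ℂ) (ξ : H) : ℂ := ∑ x : G, f x * e (-x) ξ

/-- Convolution. -/
noncomputable def conv (f K : G → ℂ) (x : G) : ℂ := ∑ y : G, f y * K (x - y)

include hmul habs

lemma Fmul_conj (f g : G → ℂ) (ξ : H) :
    Fhat e f ξ * (starRingEnd ℂ) (Fhat e g ξ)
      = ∑ x : G, ∑ y : G, (f x * (starRingEnd ℂ) (g y)) * e (y - x) ξ := by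
  unfold Fhat
  rw [map_sum, Finset.sum_mul_sum]
  refine Finset.sum_congr rfl fun x _ => Finset.sum_congr rfl fun y _ => ?_
  rw [map_mul, star_e e hmul habs, neg_neg]
  have hexy : e (-x) ξ * e y ξ = e (y - x) ξ := by
    rw [← hmul, neg_add_eq_sub]
  rw [← hexy]; ring

include horth in
/-- Orthogonality pairing. -/
lemma pair (f g : G → ℂ) :
    ∑ ξ : H, Fhat e f ξ * (starRingEnd ℂ) (Fhat e g ξ)
      = (Fintype.card G : ℂ) * ∑ x : G, f x * (starRingEnd ℂ) (g x) := by
  calc ∑ ξ : H, Fhat e f ξ * (starRingEnd ℂ) (Fhat e g ξ)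
      = ∑ ξ : H, ∑ x : G, ∑ y : G, (f x * (starRingEnd ℂ) (g y)) * e (y - x) ξ :=
        Finset.sum_congr rfl fun ξ _ => Fmul_conj e hmul habs f g ξ
    _ = ∑ x : G, ∑ y : G, (f x * (starRingEnd ℂ) (g y)) * ∑ ξ : H, e (y - x) ξ := by
        rw [Finset.sum_comm]
        refine Finset.sum_congr rfl fun x _ => ?_
        rw [Finset.sum_comm]
        refine Finset.sum_congr rfl fun y _ => ?_
        rw [Finset.mul_sum]
    _ = ∑ x : G, ∑ y : G, (f x * (starRingEnd ℂ) (g y)) *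
          (if y = x then (Fintype.card G : ℂ) else 0) := by
        refine Finset.sum_congr rfl fun x _ => Finset.sum_congr rfl fun y _ => ?_
        rw [horth]
        simp [sub_eq_zero]
    _ = (Fintype.card G : ℂ) * ∑ x : G, f x * (starRingEnd ℂ) (g x) := by
        rw [Finset.mul_sum]
        refine Finset.sum_congr rfl fun x _ => ?_
        rw [Finset.sum_eq_single x]
        · simp [mul_comm]
        · intro y _ hy; simp [hy]
        · intro hx; simp at hx

include horth in
lemma parseval (f : G → ℂ) :
    ∑ ξ : H, Complex.normSq (Fhat e f ξ)
      = (Fintype.card G : ℝ) * ∑ x : G, Complex.normSq (f x) := by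
  have h := pair e hmul habs horth f f
  apply Complex.ofReal_injective
  push_cast
  calc (∑ ξ : H, (Complex.normSq (Fhat e f ξ) : ℂ))
      = ∑ ξ : H, Fhat e f ξ * (starRingEnd ℂ) (Fhat e f ξ) :=
        Finset.sum_congr rfl fun ξ _ => (Complex.mul_conj _).symm
    _ = (Fintype.card G : ℂ) * ∑ x : G, f x * (starRingEnd ℂ) (f x) := h
    _ = (Fintype.card G : ℂ) * ∑ x : G, (Complex.normSq (f x) : ℂ) := by
        refine congrArg _ (Finset.sum_congr rfl fun x _ => Complex.mul_conj _)

lemma Fhat_conv (f K : G → ℂ) (ξ : H) :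
    Fhat e (conv f K) ξ = Fhat e f ξ * Fhat e K ξ := by
  unfold Fhat conv
  calc ∑ x : G, (∑ y : G, f y * K (x - y)) * e (-x) ξ
      = ∑ x : G, ∑ y : G, f y * (K (x - y) * e (-x) ξ) := by
        refine Finset.sum_congr rfl fun x _ => ?_
        rw [Finset.sum_mul]
        exact Finset.sum_congr rfl fun y _ => by ring
    _ = ∑ y : G, f y * ∑ x : G, K (x - y) * e (-x) ξ := by
        rw [Finset.sum_comm]
        exact Finset.sum_congr rfl fun y _ => by rw [Finset.mul_sum]
    _ = ∑ y : G, f y * (e (-y) ξ * ∑ z : G, K z * e (-z) ξ) := by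
        refine Finset.sum_congr rfl fun y _ => ?_
        congr 1
        rw [Finset.mul_sum]
        refine (Fintype.sum_equiv (Equiv.subRight y) _ _ fun x => ?_)
        simp only [Equiv.subRight_apply]
        have h1 : e (-(x - y)) ξ = e (-x) ξ * e y ξ := by
          rw [← hmul]; congr 1; abel
        have h2 := e_neg_mul e hmul habs y ξ
        rw [h1]
        linear_combination (-(K (x - y) * e (-x) ξ)) * h2
    _ = (∑ y : G, f y * e (-y) ξ) * ∑ z : G, K z * e (-z) ξ := by
        rw [Finset.sum_mul]
        exact Finset.sum_congr rfl fun y _ => by ring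

lemma weighted_pair (w : H → ℝ) (g : G → ℂ) :
    ∑ ζ : H, (w ζ : ℂ) * (Fhat e g ζ * (starRingEnd ℂ) (Fhat e g ζ))
      = ∑ y : G, (starRingEnd ℂ) (g y) *
          conv g (fun z => ∑ ζ : H, (w ζ : ℂ) * e z ζ) y := by
  calc ∑ ζ : H, (w ζ : ℂ) * (Fhat e g ζ * (starRingEnd ℂ) (Fhat e g ζ))
      = ∑ ζ : H, ∑ x : G, ∑ y : G,
          (g x * (starRingEnd ℂ) (g y)) * ((w ζ : ℂ) * e (y - x) ζ) := by
        refine Finset.sum_congr rfl fun ζ _ => ?_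
        rw [Fmul_conj e hmul habs, Finset.mul_sum]
        refine Finset.sum_congr rfl fun x _ => ?_
        rw [Finset.mul_sum]
        exact Finset.sum_congr rfl fun y _ => by ring
    _ = ∑ x : G, ∑ y : G,
          (g x * (starRingEnd ℂ) (g y)) * ∑ ζ : H, (w ζ : ℂ) * e (y - x) ζ := by
        rw [Finset.sum_comm]
        refine Finset.sum_congr rfl fun x _ => ?_
        rw [Finset.sum_comm]
        refine Finset.sum_congr rfl fun y _ => ?_
        rw [Finset.mul_sum]
    _ = ∑ y : G, (starRingEnd ℂ) (g y) *
          conv g (fun z => ∑ ζ : H, (w ζ : ℂ) * e z ζ) y := by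
        rw [Finset.sum_comm]
        refine Finset.sum_congr rfl fun y _ => ?_
        unfold conv
        rw [Finset.mul_sum]
        exact Finset.sum_congr rfl fun x _ => by ring


section mu1

open Classical in
include hmul hmulH habs in
/-- Dyadic decomposition bound for the low-frequency multiplier. -/
lemma mu1_bound (BH : ℝ → Set H)
    (hBHmono : ∀ ρ ρ' : ℝ, 0 < ρ → ρ ≤ ρ' → BH ρ ⊆ BH ρ')
    (hBHcov : ∀ ξ : H, ∃ ρ : ℝ, 0 < ρ ∧ ξ ∈ BH ρ)
    (w : H → ℝ) (hw : ∀ ξ : H, 0 ≤ w ξ)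
    (n a C₁ C₂ A : ℝ) (han : a < n)
    (hC₁ : 0 ≤ C₁) (hC₂ : 0 ≤ C₂) (hA : 0 ≤ A)
    (hFmu : ∀ ρ : ℝ, 0 < ρ → ∀ ξ : H,
      ∑ η : H, Set.indicator (BH ρ) (fun _ => (1 : ℝ)) (η - ξ) * w η ≤ A * ρ ^ a)
    (ρ : ℝ) (hρ : 0 < ρ) (f : G → ℝ)
    (hsum : ∑ z : G, |f z| ≤ C₁ * (2 * ρ) ^ n)
    (hdecay : ∀ s : ℝ, 1 / ρ ≤ s → ∀ τ : H, -τ ∉ BH s →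
      ‖∑ x : G, (f x : ℂ) * e (-x) τ‖ ≤ C₂ * s ^ (-n))
    (ξ : H) :
    ‖Fhat e (fun z => (f z : ℂ) * ∑ ζ : H, (w ζ : ℂ) * e z ζ) ξ‖
      ≤ ((2:ℝ) ^ n / (1 - (2:ℝ) ^ (a - n))) * ((C₁ + C₂) * A) * ρ ^ (n - a) := by
  set fc : G → ℂ := fun x => (f x : ℂ) with hfc
  have hdecay' : ∀ s : ℝ, 1 / ρ ≤ s → ∀ τ : H, -τ ∉ BH s →
      ‖Fhat e fc τ‖ ≤ C₂ * s ^ (-n) := hdecay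
  -- Step 0 : convolution identity on the frequency side
  have step0 : Fhat e (fun z => fc z * ∑ ζ : H, (w ζ : ℂ) * e z ζ) ξ
      = ∑ η : H, (w η : ℂ) * Fhat e fc (ξ - η) := by
    unfold Fhat
    calc ∑ z : G, (fc z * ∑ ζ : H, (w ζ : ℂ) * e z ζ) * e (-z) ξ
        = ∑ z : G, ∑ η : H, (w η : ℂ) * (fc z * (e z η * e (-z) ξ)) := by
          refine Finset.sum_congr rfl fun z _ => ?_
          rw [Finset.mul_sum, Finset.sum_mul]
          exact Finset.sum_congr rfl fun η _ => by ring
      _ = ∑ η : H, (w η : ℂ) * ∑ z : G, fc z * e (-z) (ξ - η) := by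
          rw [Finset.sum_comm]
          refine Finset.sum_congr rfl fun η _ => ?_
          rw [Finset.mul_sum]
          refine Finset.sum_congr rfl fun z _ => ?_
          have h1 : e (-z) (ξ - η) = e (-z) ξ * e (-z) (-η) := by
            rw [← hmulH, sub_eq_add_neg]
          have h2 : e (-z) (-η) = e z η := by
            rw [e_negH e hmul hmulH habs, neg_neg]
          rw [h1, h2]; ring
  rw [step0]
  -- Step 1 : triangle inequality
  have step1 : ‖∑ η : H, (w η : ℂ) * Fhat e fc (ξ - η)‖
      ≤ ∑ η : H, w η * ‖Fhat e fc (ξ - η)‖ := by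
    refine (norm_sum_le _ _).trans ?_
    refine le_of_eq (Finset.sum_congr rfl fun η _ => ?_)
    rw [norm_mul, Complex.norm_real, Real.norm_eq_abs, abs_of_nonneg (hw η)]
  refine step1.trans ?_
  -- the dyadic radii
  set D : ℕ → ℝ := fun k => (2:ℝ) ^ ((k : ℕ) : ℝ) / ρ with hD
  have hDpos : ∀ k, 0 < D k := fun k =>
    div_pos (Real.rpow_pos_of_pos two_pos _) hρ
  have hDge : ∀ k, 1 / ρ ≤ D k := by
    intro k
    have h1 : (1:ℝ) ≤ (2:ℝ) ^ ((k : ℕ) : ℝ) := by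
      have := Real.rpow_le_rpow_of_exponent_le (by norm_num : (1:ℝ) ≤ 2)
        (by positivity : (0:ℝ) ≤ ((k : ℕ) : ℝ))
      rwa [Real.rpow_zero] at this
    exact (div_le_div_iff_of_pos_right hρ).2 h1
  have hDsucc : ∀ k : ℕ, D (k + 1) = 2 * D k := by
    intro k
    have : (2:ℝ) ^ (((k+1 : ℕ)) : ℝ) = 2 * (2:ℝ) ^ ((k : ℕ) : ℝ) := by
      push_cast
      rw [Real.rpow_add two_pos, Real.rpow_one]
      ring
    simp only [hD, this]
    ring
  -- existence of a dyadic scale catching each point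
  have hex : ∀ η : H, ∃ k : ℕ, (η - ξ) ∈ BH (D k) := by
    intro η
    obtain ⟨r, hr, hmem⟩ := hBHcov (η - ξ)
    obtain ⟨M, hM⟩ := exists_nat_gt (ρ * r)
    refine ⟨M, hBHmono r (D M) hr ?_ hmem⟩
    have h1 : (M : ℝ) ≤ (2:ℝ) ^ ((M : ℕ) : ℝ) := by
      rw [Real.rpow_natCast]
      calc (M : ℝ) ≤ ((2 ^ M : ℕ) : ℝ) := by exact_mod_cast (Nat.lt_two_pow_self (n := M)).le
        _ = (2:ℝ) ^ M := by push_cast; ring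
    rw [hD, le_div_iff₀ hρ]
    nlinarith
  set mfun : H → ℕ := fun η => Nat.find (hex η) with hmfun
  have hmspec : ∀ η, (η - ξ) ∈ BH (D (mfun η)) := fun η => Nat.find_spec (hex η)
  set Kmax : ℕ := Finset.univ.sup mfun with hKmax
  have hmle : ∀ η : H, mfun η ∈ Finset.range (Kmax + 1) := by
    intro η
    exact Finset.mem_range.2 (Nat.lt_succ_of_le (Finset.le_sup (Finset.mem_univ η)))
  -- split the sum into dyadic fibers
  have split : ∑ η : H, w η * ‖Fhat e fc (ξ - η)‖
      = ∑ k ∈ Finset.range (Kmax + 1),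
          ∑ η ∈ Finset.univ.filter (fun η => mfun η = k),
            w η * ‖Fhat e fc (ξ - η)‖ :=
    (Finset.sum_fiberwise_of_maps_to (fun η _ => hmle η) _).symm
  rw [split]
  -- bound each fiber
  set r : ℝ := (2:ℝ) ^ (a - n) with hr
  have hr0 : 0 < r := Real.rpow_pos_of_pos two_pos _
  have hr1 : r < 1 := Real.rpow_lt_one_of_one_lt_of_neg one_lt_two (by linarith)
  have h1r : 0 < 1 - r := by linarith
  have fiber_bound : ∀ k ∈ Finset.range (Kmax + 1),
      ∑ η ∈ Finset.univ.filter (fun η => mfun η = k),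
          w η * ‖Fhat e fc (ξ - η)‖
        ≤ (((C₁ + C₂) * (2:ℝ) ^ n * A) * ρ ^ (n - a)) * r ^ k := by
    intro k _
    have habsb : ∀ η ∈ Finset.univ.filter (fun η => mfun η = k),
        ‖Fhat e fc (ξ - η)‖ ≤ (C₁ + C₂) * (2:ℝ) ^ n * (D k) ^ (-n) := by
      intro η hη
      have hmk : mfun η = k := (Finset.mem_filter.1 hη).2
      cases k with
      | zero =>
        have htriv : ‖Fhat e fc (ξ - η)‖ ≤ ∑ z : G, |f z| := by
          refine (norm_sum_le _ _).trans (le_of_eq ?_)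
          refine Finset.sum_congr rfl fun z _ => ?_
          rw [norm_mul, Complex.norm_real, Real.norm_eq_abs, habs, mul_one]
        have hD0 : D 0 = 1 / ρ := by
          simp [hD, Real.rpow_zero]
        have hD0n : (D 0) ^ (-n) = ρ ^ n := by
          rw [hD0, one_div, Real.inv_rpow hρ.le, Real.rpow_neg hρ.le, inv_inv]
        have h2ρ : (2 * ρ) ^ n = (2:ℝ) ^ n * ρ ^ n :=
          Real.mul_rpow (by norm_num) hρ.le
        have h2n : (0:ℝ) ≤ (2:ℝ) ^ n := (Real.rpow_pos_of_pos two_pos n).le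
        have hρn : (0:ℝ) ≤ ρ ^ n := (Real.rpow_pos_of_pos hρ n).le
        calc ‖Fhat e fc (ξ - η)‖ ≤ ∑ z : G, |f z| := htriv
          _ ≤ C₁ * (2 * ρ) ^ n := hsum
          _ = C₁ * ((2:ℝ) ^ n * ρ ^ n) := by rw [h2ρ]
          _ ≤ (C₁ + C₂) * ((2:ℝ) ^ n * ρ ^ n) := by nlinarith [mul_nonneg hC₂ (mul_nonneg h2n hρn)]
          _ = (C₁ + C₂) * (2:ℝ) ^ n * (D 0) ^ (-n) := by rw [hD0n]; ring
      | succ k' =>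
        have hnot : (η - ξ) ∉ BH (D k') := by
          have hlt : k' < mfun η := by omega
          exact Nat.find_min (hex η) hlt
        have hdec := hdecay' (D k') (hDge k') (ξ - η) (by rwa [neg_sub])
        have hkey : (D k') ^ (-n) = (2:ℝ) ^ n * (D (k' + 1)) ^ (-n) := by
          rw [hDsucc k', Real.mul_rpow (by norm_num) (hDpos k').le,
            Real.rpow_neg (by norm_num : (0:ℝ) ≤ 2)]
          have h2n0 : (2:ℝ) ^ n ≠ 0 := (Real.rpow_pos_of_pos two_pos n).ne'
          field_simp
        calc ‖Fhat e fc (ξ - η)‖ ≤ C₂ * (D k') ^ (-n) := hdec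
          _ = C₂ * ((2:ℝ) ^ n * (D (k' + 1)) ^ (-n)) := by rw [hkey]
          _ ≤ (C₁ + C₂) * ((2:ℝ) ^ n * (D (k' + 1)) ^ (-n)) := by
              have : (0:ℝ) ≤ (2:ℝ) ^ n * (D (k' + 1)) ^ (-n) := by positivity
              nlinarith
          _ = (C₁ + C₂) * (2:ℝ) ^ n * (D (k' + 1)) ^ (-n) := by ring
    have hwb : ∑ η ∈ Finset.univ.filter (fun η => mfun η = k), w η ≤ A * (D k) ^ a := by
      calc ∑ η ∈ Finset.univ.filter (fun η => mfun η = k), w η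
          = ∑ η ∈ Finset.univ.filter (fun η => mfun η = k),
              Set.indicator (BH (D k)) (fun _ => (1:ℝ)) (η - ξ) * w η := by
            refine Finset.sum_congr rfl fun η hη => ?_
            have hmk : mfun η = k := (Finset.mem_filter.1 hη).2
            have hmem : (η - ξ) ∈ BH (D k) := hmk ▸ hmspec η
            rw [Set.indicator_of_mem hmem, one_mul]
        _ ≤ ∑ η : H, Set.indicator (BH (D k)) (fun _ => (1:ℝ)) (η - ξ) * w η := by
            refine Finset.sum_le_sum_of_subset_of_nonneg (Finset.filter_subset _ _)
              fun η _ _ => mul_nonneg (Set.indicator_nonneg (fun _ _ => zero_le_one) _) (hw η)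
        _ ≤ A * (D k) ^ a := hFmu (D k) (hDpos k) ξ
    have hcoef : (0:ℝ) ≤ (C₁ + C₂) * (2:ℝ) ^ n * (D k) ^ (-n) := by positivity
    calc ∑ η ∈ Finset.univ.filter (fun η => mfun η = k),
            w η * ‖Fhat e fc (ξ - η)‖
        ≤ ∑ η ∈ Finset.univ.filter (fun η => mfun η = k),
            w η * ((C₁ + C₂) * (2:ℝ) ^ n * (D k) ^ (-n)) :=
          Finset.sum_le_sum fun η hη =>
            mul_le_mul_of_nonneg_left (habsb η hη) (hw η)
      _ = ((C₁ + C₂) * (2:ℝ) ^ n * (D k) ^ (-n)) *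
            ∑ η ∈ Finset.univ.filter (fun η => mfun η = k), w η := by
          rw [← Finset.sum_mul, mul_comm]
      _ ≤ ((C₁ + C₂) * (2:ℝ) ^ n * (D k) ^ (-n)) * (A * (D k) ^ a) :=
          mul_le_mul_of_nonneg_left hwb hcoef
      _ = (((C₁ + C₂) * (2:ℝ) ^ n * A) * ρ ^ (n - a)) * r ^ k := by
          have hDk : (D k) ^ (-n) * (D k) ^ a = (D k) ^ (a - n) := by
            rw [← Real.rpow_add (hDpos k), neg_add_eq_sub]
          have hDkval : (D k) ^ (a - n) = r ^ k * ρ ^ (n - a) := by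
            rw [hD]
            rw [Real.div_rpow (Real.rpow_pos_of_pos two_pos _).le hρ.le]
            have h1 : ((2:ℝ) ^ ((k : ℕ) : ℝ)) ^ (a - n) = r ^ k := by
              rw [← Real.rpow_natCast r k, hr, ← Real.rpow_mul (by norm_num : (0:ℝ) ≤ 2),
                ← Real.rpow_mul (by norm_num : (0:ℝ) ≤ 2)]
              ring_nf
            have h2 : ρ ^ (a - n) = (ρ ^ (n - a))⁻¹ := by
              rw [← Real.rpow_neg hρ.le, neg_sub]
            rw [h1, h2, div_eq_mul_inv, inv_inv]
          calc ((C₁ + C₂) * (2:ℝ) ^ n * (D k) ^ (-n)) * (A * (D k) ^ a)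
              = ((C₁ + C₂) * (2:ℝ) ^ n * A) * ((D k) ^ (-n) * (D k) ^ a) := by ring
            _ = ((C₁ + C₂) * (2:ℝ) ^ n * A) * (r ^ k * ρ ^ (n - a)) := by
                rw [hDk, hDkval]
            _ = (((C₁ + C₂) * (2:ℝ) ^ n * A) * ρ ^ (n - a)) * r ^ k := by ring
  -- sum the geometric series
  have hgeom : ∑ k ∈ Finset.range (Kmax + 1), r ^ k ≤ 1 / (1 - r) := by
    rw [geom_sum_eq hr1.ne]
    have heq : (r ^ (Kmax + 1) - 1) / (r - 1) = (1 - r ^ (Kmax + 1)) / (1 - r) := by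
      rw [← neg_div_neg_eq]; ring_nf
    rw [heq, div_le_div_iff₀ h1r h1r]
    nlinarith [pow_nonneg hr0.le (Kmax + 1)]
  have hcoef2 : (0:ℝ) ≤ ((C₁ + C₂) * (2:ℝ) ^ n * A) * ρ ^ (n - a) := by positivity
  calc ∑ k ∈ Finset.range (Kmax + 1),
          ∑ η ∈ Finset.univ.filter (fun η => mfun η = k),
            w η * ‖Fhat e fc (ξ - η)‖
      ≤ ∑ k ∈ Finset.range (Kmax + 1),
          (((C₁ + C₂) * (2:ℝ) ^ n * A) * ρ ^ (n - a)) * r ^ k :=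
        Finset.sum_le_sum fiber_bound
    _ = (((C₁ + C₂) * (2:ℝ) ^ n * A) * ρ ^ (n - a)) *
          ∑ k ∈ Finset.range (Kmax + 1), r ^ k := by rw [Finset.mul_sum]
    _ ≤ (((C₁ + C₂) * (2:ℝ) ^ n * A) * ρ ^ (n - a)) * (1 / (1 - r)) :=
        mul_le_mul_of_nonneg_left hgeom hcoef2
    _ = ((2:ℝ) ^ n / (1 - r)) * ((C₁ + C₂) * A) * ρ ^ (n - a) := by
        rw [one_div, div_eq_mul_inv]
        ring

end mu1

include hmul hmulH habs in
/-- Pointwise triangle inequality for the low multiplier. -/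
lemma mu1_tri (BH : ℝ → Set H) (w : H → ℝ) (hw : ∀ ξ : H, 0 ≤ w ξ)
    (f : G → ℝ) (ξ : H) :
    ‖Fhat e (fun z => (f z : ℂ) * ∑ ζ : H, (w ζ : ℂ) * e z ζ) ξ‖
      ≤ ∑ η : H, w η * ‖Fhat e (fun x => (f x : ℂ)) (ξ - η)‖ := by
  set fc : G → ℂ := fun x => (f x : ℂ) with hfc
  have step0 : Fhat e (fun z => fc z * ∑ ζ : H, (w ζ : ℂ) * e z ζ) ξ
      = ∑ η : H, (w η : ℂ) * Fhat e fc (ξ - η) := by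
    unfold Fhat
    calc ∑ z : G, (fc z * ∑ ζ : H, (w ζ : ℂ) * e z ζ) * e (-z) ξ
        = ∑ z : G, ∑ η : H, (w η : ℂ) * (fc z * (e z η * e (-z) ξ)) := by
          refine Finset.sum_congr rfl fun z _ => ?_
          rw [Finset.mul_sum, Finset.sum_mul]
          exact Finset.sum_congr rfl fun η _ => by ring
      _ = ∑ η : H, (w η : ℂ) * ∑ z : G, fc z * e (-z) (ξ - η) := by
          rw [Finset.sum_comm]
          refine Finset.sum_congr rfl fun η _ => ?_
          rw [Finset.mul_sum]
          refine Finset.sum_congr rfl fun z _ => ?_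
          have h1 : e (-z) (ξ - η) = e (-z) ξ * e (-z) (-η) := by
            rw [← hmulH, sub_eq_add_neg]
          have h2 : e (-z) (-η) = e z η := by
            rw [e_negH e hmul hmulH habs, neg_neg]
          rw [h1, h2]; ring
  rw [step0]
  refine (norm_sum_le _ _).trans ?_
  refine le_of_eq (Finset.sum_congr rfl fun η _ => ?_)
  rw [norm_mul, Complex.norm_real, Real.norm_eq_abs, abs_of_nonneg (hw η)]

include hmul habs horth in
/-- Plancherel for a convolution. -/
lemma master (f K : G → ℂ) :
    ∑ x : G, Complex.normSq (conv f K x)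
      = ((Fintype.card G : ℝ))⁻¹ *
          ∑ ξ : H, Complex.normSq (Fhat e f ξ) * Complex.normSq (Fhat e K ξ) := by
  have hN : (0:ℝ) < (Fintype.card G : ℝ) := by exact_mod_cast Fintype.card_pos
  have h1 := parseval e hmul habs horth (conv f K)
  have h2 : ∑ ξ : H, Complex.normSq (Fhat e (conv f K) ξ)
      = ∑ ξ : H, Complex.normSq (Fhat e f ξ) * Complex.normSq (Fhat e K ξ) := by
    refine Finset.sum_congr rfl fun ξ _ => ?_
    rw [Fhat_conv e hmul habs f K ξ, Complex.normSq_mul]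
  rw [h2] at h1
  rw [h1]
  field_simp

omit hmul habs in
/-- L¹ bound on a bump function supported in a ball. -/
lemma phi_abs_sum (BG : ℝ → Set G) (C₁ : ℝ) (n : ℝ) (ρ₀ : ℝ)
    (hcard : ((BG (2 * ρ₀)).ncard : ℝ) ≤ C₁ * (2 * ρ₀) ^ n)
    (f : G → ℝ) (hfsupp : ∀ x : G, f x ≠ 0 → x ∈ BG (2 * ρ₀))
    (hfle : ∀ x : G, |f x| ≤ 1) :
    ∑ z : G, |f z| ≤ C₁ * (2 * ρ₀) ^ n := by
  classical
  calc ∑ z : G, |f z| = ∑ z ∈ (BG (2 * ρ₀)).toFinset, |f z| := by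
        refine (Finset.sum_subset (Finset.subset_univ _) fun z _ hz => ?_).symm
        rw [Set.mem_toFinset] at hz
        have : f z = 0 := by
          by_contra h
          exact hz (hfsupp z h)
        rw [this, abs_zero]
    _ ≤ ∑ z ∈ (BG (2 * ρ₀)).toFinset, 1 :=
        Finset.sum_le_sum fun z _ => hfle z
    _ = ((BG (2 * ρ₀)).ncard : ℝ) := by
        rw [Finset.sum_const, nsmul_eq_mul, mul_one, Set.ncard_eq_toFinset_card']
    _ ≤ C₁ * (2 * ρ₀) ^ n := hcard




omit hmul habs in
lemma ind_sum (E : Set G) :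
    ∑ x : G, Set.indicator E (fun _ => (1:ℝ)) x = (E.ncard : ℝ) := by
  classical
  calc ∑ x : G, Set.indicator E (fun _ => (1:ℝ)) x
      = ∑ x ∈ E.toFinset, Set.indicator E (fun _ => (1:ℝ)) x := by
        refine (Finset.sum_subset (Finset.subset_univ _) fun x _ hx => ?_).symm
        rw [Set.mem_toFinset] at hx
        exact Set.indicator_of_notMem hx _
    _ = ∑ x ∈ E.toFinset, 1 := by
        refine Finset.sum_congr rfl fun x hx => ?_
        rw [Set.mem_toFinset] at hx
        exact Set.indicator_of_mem hx _
    _ = (E.ncard : ℝ) := by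
        rw [Finset.sum_const, nsmul_eq_mul, mul_one, Set.ncard_eq_toFinset_card']

include hmul hmulH habs horth in
/-- The (single-scale) Tomas–Stein restriction estimate. -/
lemma restriction
    (BG : ℝ → Set G) (BH : ℝ → Set H)
    (hBHmono : ∀ ρ ρ' : ℝ, 0 < ρ → ρ ≤ ρ' → BH ρ ⊆ BH ρ')
    (hBHcov : ∀ ξ : H, ∃ ρ : ℝ, 0 < ρ ∧ ξ ∈ BH ρ)
    (φ : ℝ → G → ℝ) (w : H → ℝ) (hw : ∀ ξ : H, 0 ≤ w ξ)
    (n a b C₁ C₂ A B : ℝ) (han : a < n)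
    (hC₁ : 0 ≤ C₁) (hC₂ : 0 ≤ C₂) (hA : 0 ≤ A) (hB : 0 ≤ B)
    (hBGcard : ∀ ρ : ℝ, 0 < ρ → ((BG ρ).ncard : ℝ) ≤ C₁ * ρ ^ n)
    (hφone : ∀ ρ : ℝ, 0 < ρ → ∀ x ∈ BG ρ, φ ρ x = 1)
    (hφsupp : ∀ ρ : ℝ, 0 < ρ → ∀ x : G, φ ρ x ≠ 0 → x ∈ BG (2 * ρ))
    (hφle : ∀ (ρ : ℝ) (x : G), |φ ρ x| ≤ 1)
    (hφdecay : ∀ ρ : ℝ, 0 < ρ → ∀ s : ℝ, 1 / ρ ≤ s → ∀ ξ : H, -ξ ∉ BH s →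
      ‖∑ x : G, (φ ρ x : ℂ) * e (-x) ξ‖ ≤ C₂ * s ^ (-n))
    (hFmu : ∀ ρ : ℝ, 0 < ρ → ∀ ξ : H,
      ∑ η : H, Set.indicator (BH ρ) (fun _ => (1 : ℝ)) (η - ξ) * w η ≤ A * ρ ^ a)
    (hRmu : ∀ ρ : ℝ, 0 < ρ → ∀ x : G, x ∉ BG ρ →
      ‖∑ ξ : H, (w ξ : ℂ) * e x ξ‖ ≤ B * ρ ^ (-b / 2))
    (E : Set G) (g : G → ℂ)
    (hg : ∀ x : G, ‖g x‖ = Set.indicator E (fun _ => (1:ℝ)) x)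
    (ρ' : ℝ) (hρ' : 0 < ρ') :
    ∑ ζ : H, w ζ * Complex.normSq (Fhat e g ζ)
      ≤ (((2:ℝ) ^ n / (1 - (2:ℝ) ^ (a - n))) * ((C₁ + C₂) * A) * (E.ncard : ℝ)) * ρ' ^ (n - a)
        + (2 * B * ((E.ncard : ℝ) * (E.ncard : ℝ))) * ρ' ^ (-b / 2) := by
  have hN : (0:ℝ) < (Fintype.card G : ℝ) := by exact_mod_cast Fintype.card_pos
  set mu : G → ℂ := fun z => ∑ ζ : H, (w ζ : ℂ) * e z ζ with hmu
  set K₁ : G → ℂ := fun z => (φ ρ' z : ℂ) * mu z with hK₁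
  set K₂ : G → ℂ := fun z => (1 - (φ ρ' z : ℂ)) * mu z with hK₂
  set M' : ℝ := ((2:ℝ) ^ n / (1 - (2:ℝ) ^ (a - n))) * ((C₁ + C₂) * A) * ρ' ^ (n - a) with hM'
  have hg2 : ∀ x : G, Complex.normSq (g x) = Set.indicator E (fun _ => (1:ℝ)) x := by
    intro x
    rw [← Complex.sq_norm, hg x]
    by_cases hx : x ∈ E
    · simp [Set.indicator_of_mem hx]
    · simp [Set.indicator_of_notMem hx]
  set T : ℝ := ∑ ζ : H, w ζ * Complex.normSq (Fhat e g ζ) with hT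
  have hT0 : 0 ≤ T :=
    Finset.sum_nonneg fun ζ _ => mul_nonneg (hw ζ) (Complex.normSq_nonneg _)
  -- identity: T as a bilinear form
  have hTc : (T : ℂ) = ∑ y : G, (starRingEnd ℂ) (g y) * conv g mu y := by
    rw [← weighted_pair e hmul habs w g, hT]
    push_cast
    refine Finset.sum_congr rfl fun ζ _ => ?_
    rw [Complex.mul_conj]
  -- split the kernel
  have hconv_split : ∀ y : G, conv g mu y = conv g K₁ y + conv g K₂ y := by
    intro y
    unfold conv
    rw [← Finset.sum_add_distrib]
    refine Finset.sum_congr rfl fun x _ => ?_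
    rw [hK₁, hK₂]
    ring
  have hTsplit : (T : ℂ) = (∑ y : G, (starRingEnd ℂ) (g y) * conv g K₁ y)
      + ∑ y : G, (starRingEnd ℂ) (g y) * conv g K₂ y := by
    rw [hTc, ← Finset.sum_add_distrib]
    refine Finset.sum_congr rfl fun y _ => ?_
    rw [hconv_split y]
    ring
  -- bound for K₁ via the multiplier estimate
  have hmu1 : ∀ ζ : H, ‖Fhat e K₁ ζ‖ ≤ M' := by
    intro ζ
    have hsum' : ∑ z : G, |φ ρ' z| ≤ C₁ * (2 * ρ') ^ n :=
      phi_abs_sum BG C₁ n ρ' (hBGcard (2 * ρ') (by linarith)) (φ ρ')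
        (hφsupp ρ' hρ') (hφle ρ')
    exact mu1_bound e hmul hmulH habs BH hBHmono hBHcov w hw n a C₁ C₂ A han hC₁ hC₂ hA
      hFmu ρ' hρ' (φ ρ') hsum' (hφdecay ρ' hρ') ζ
  have hpart1 : ‖∑ y : G, (starRingEnd ℂ) (g y) * conv g K₁ y‖
      ≤ M' * (E.ncard : ℝ) := by
    have hpair := pair e hmul habs horth (conv g K₁) g
    have hid : ∑ y : G, (starRingEnd ℂ) (g y) * conv g K₁ y
        = ((Fintype.card G : ℝ) : ℂ)⁻¹ *
            ∑ ζ : H, Fhat e g ζ * Fhat e K₁ ζ * (starRingEnd ℂ) (Fhat e g ζ) := by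
      have h2 : ∑ ζ : H, Fhat e g ζ * Fhat e K₁ ζ * (starRingEnd ℂ) (Fhat e g ζ)
          = (Fintype.card G : ℂ) * ∑ x : G, conv g K₁ x * (starRingEnd ℂ) (g x) := by
        rw [← hpair]
        refine Finset.sum_congr rfl fun ζ _ => ?_
        rw [Fhat_conv e hmul habs g K₁ ζ]
      rw [h2]
      rw [← mul_assoc]
      have hNne : ((Fintype.card G : ℝ) : ℂ) ≠ 0 := by
        exact_mod_cast hN.ne'
      rw [show ((Fintype.card G : ℝ) : ℂ) = (Fintype.card G : ℂ) by push_cast; ring] at hNne ⊢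
      rw [inv_mul_cancel₀ hNne, one_mul]
      exact Finset.sum_congr rfl fun x _ => by ring
    rw [hid]
    rw [norm_mul]
    have habsinv : ‖(((Fintype.card G : ℝ) : ℂ))⁻¹‖ = ((Fintype.card G : ℝ))⁻¹ := by
      rw [norm_inv, Complex.norm_real, Real.norm_eq_abs, abs_of_pos hN]
    rw [norm_inv, Complex.norm_real, Real.norm_eq_abs, abs_of_pos hN]
    have hb1 : ‖∑ ζ : H, Fhat e g ζ * Fhat e K₁ ζ * (starRingEnd ℂ) (Fhat e g ζ)‖
        ≤ M' * ((Fintype.card G : ℝ) * ∑ x : G, Complex.normSq (g x)) := by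
      refine (norm_sum_le _ _).trans ?_
      have hM'0 : 0 ≤ M' := le_trans (norm_nonneg _) (hmu1 0)
      calc ∑ ζ : H, ‖Fhat e g ζ * Fhat e K₁ ζ * (starRingEnd ℂ) (Fhat e g ζ)‖
          = ∑ ζ : H, ‖Fhat e K₁ ζ‖ * Complex.normSq (Fhat e g ζ) := by
            refine Finset.sum_congr rfl fun ζ _ => ?_
            rw [norm_mul, norm_mul, Complex.norm_conj, ← Complex.sq_norm]
            ring
        _ ≤ ∑ ζ : H, M' * Complex.normSq (Fhat e g ζ) :=
            Finset.sum_le_sum fun ζ _ =>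
              mul_le_mul_of_nonneg_right (hmu1 ζ) (Complex.normSq_nonneg _)
        _ = M' * ∑ ζ : H, Complex.normSq (Fhat e g ζ) := by rw [Finset.mul_sum]
        _ = M' * ((Fintype.card G : ℝ) * ∑ x : G, Complex.normSq (g x)) := by
            rw [parseval e hmul habs horth g]
    have hsumg : ∑ x : G, Complex.normSq (g x) = (E.ncard : ℝ) := by
      rw [← ind_sum E]
      exact Finset.sum_congr rfl fun x _ => hg2 x
    calc ((Fintype.card G : ℝ))⁻¹ *
            ‖∑ ζ : H, Fhat e g ζ * Fhat e K₁ ζ * (starRingEnd ℂ) (Fhat e g ζ)‖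
        ≤ ((Fintype.card G : ℝ))⁻¹ *
            (M' * ((Fintype.card G : ℝ) * ∑ x : G, Complex.normSq (g x))) :=
          mul_le_mul_of_nonneg_left hb1 (by positivity)
      _ = M' * ∑ x : G, Complex.normSq (g x) := by
          field_simp
      _ = M' * (E.ncard : ℝ) := by rw [hsumg]
  -- bound for K₂ via the measure decay
  have hK₂abs : ∀ z : G, ‖K₂ z‖ ≤ 2 * (B * ρ' ^ (-b / 2)) := by
    intro z
    by_cases hz : z ∈ BG ρ'
    · have : φ ρ' z = 1 := hφone ρ' hρ' z hz
      have : K₂ z = 0 := by rw [hK₂]; simp [this]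
      rw [this, norm_zero]
      have : (0:ℝ) ≤ B * ρ' ^ (-b / 2) := by positivity
      linarith
    · have h1 : ‖mu z‖ ≤ B * ρ' ^ (-b / 2) := hRmu ρ' hρ' z hz
      have h2 : ‖1 - (φ ρ' z : ℂ)‖ ≤ 2 := by
        have h3 : ‖1 - (φ ρ' z : ℂ)‖
            ≤ ‖(1:ℂ)‖ + ‖(φ ρ' z : ℂ)‖ := by
          simpa [sub_eq_add_neg] using norm_add_le (1:ℂ) (-(φ ρ' z : ℂ))
        rw [norm_one, Complex.norm_real, Real.norm_eq_abs] at h3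
        have := hφle ρ' z
        linarith
      calc ‖K₂ z‖ = ‖1 - (φ ρ' z : ℂ)‖ * ‖mu z‖ := by
            rw [hK₂, norm_mul]
        _ ≤ 2 * (B * ρ' ^ (-b / 2)) :=
            mul_le_mul h2 h1 (norm_nonneg _) (by norm_num)
  have hpart2 : ‖∑ y : G, (starRingEnd ℂ) (g y) * conv g K₂ y‖
      ≤ (2 * B * ((E.ncard : ℝ) * (E.ncard : ℝ))) * ρ' ^ (-b / 2) := by
    have hc0 : (0:ℝ) ≤ 2 * (B * ρ' ^ (-b / 2)) := by positivity
    have hconvb : ∀ y : G, ‖conv g K₂ y‖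
        ≤ (E.ncard : ℝ) * (2 * (B * ρ' ^ (-b / 2))) := by
      intro y
      refine (norm_sum_le _ _).trans ?_
      calc ∑ x : G, ‖g x * K₂ (y - x)‖
          ≤ ∑ x : G, Set.indicator E (fun _ => (1:ℝ)) x * (2 * (B * ρ' ^ (-b / 2))) := by
            refine Finset.sum_le_sum fun x _ => ?_
            rw [norm_mul, hg x]
            exact mul_le_mul_of_nonneg_left (hK₂abs (y - x))
              (Set.indicator_nonneg (fun _ _ => zero_le_one) _)
        _ = (E.ncard : ℝ) * (2 * (B * ρ' ^ (-b / 2))) := by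
            rw [← Finset.sum_mul, ind_sum E]
    refine (norm_sum_le _ _).trans ?_
    calc ∑ y : G, ‖(starRingEnd ℂ) (g y) * conv g K₂ y‖
        ≤ ∑ y : G, Set.indicator E (fun _ => (1:ℝ)) y *
            ((E.ncard : ℝ) * (2 * (B * ρ' ^ (-b / 2)))) := by
          refine Finset.sum_le_sum fun y _ => ?_
          rw [norm_mul, Complex.norm_conj, hg y]
          exact mul_le_mul_of_nonneg_left (hconvb y)
            (Set.indicator_nonneg (fun _ _ => zero_le_one) _)
      _ = (E.ncard : ℝ) * ((E.ncard : ℝ) * (2 * (B * ρ' ^ (-b / 2)))) := by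
          rw [← Finset.sum_mul, ind_sum E]
      _ = (2 * B * ((E.ncard : ℝ) * (E.ncard : ℝ))) * ρ' ^ (-b / 2) := by ring
  calc T = ‖(T : ℂ)‖ := by rw [Complex.norm_real, Real.norm_eq_abs, abs_of_nonneg hT0]
    _ = ‖(∑ y : G, (starRingEnd ℂ) (g y) * conv g K₁ y)
        + ∑ y : G, (starRingEnd ℂ) (g y) * conv g K₂ y‖ := by rw [hTsplit]
    _ ≤ ‖∑ y : G, (starRingEnd ℂ) (g y) * conv g K₁ y‖
        + ‖∑ y : G, (starRingEnd ℂ) (g y) * conv g K₂ y‖ :=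
        norm_add_le _ _
    _ ≤ M' * (E.ncard : ℝ) + (2 * B * ((E.ncard : ℝ) * (E.ncard : ℝ))) * ρ' ^ (-b / 2) :=
        add_le_add hpart1 hpart2
    _ = (((2:ℝ) ^ n / (1 - (2:ℝ) ^ (a - n))) * ((C₁ + C₂) * A) * (E.ncard : ℝ)) * ρ' ^ (n - a)
        + (2 * B * ((E.ncard : ℝ) * (E.ncard : ℝ))) * ρ' ^ (-b / 2) := by
        rw [hM']
        ring


omit hmul habs in
lemma aux_pow (X Y q : ℝ) (hX : 0 < X) (hY : 0 < Y) :
    X * (Y / X) ^ q = X ^ (1 - q) * Y ^ q := by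
  have h1 : (Y / X) ^ q = Y ^ q / X ^ q := Real.div_rpow hY.le hX.le q
  have h2 : X ^ (1 - q) * X ^ q = X := by
    rw [← Real.rpow_add hX]
    norm_num
  have h3 : X ^ q ≠ 0 := (Real.rpow_pos_of_pos hX q).ne'
  rw [h1, ← mul_div_assoc, div_eq_iff h3]
  calc X * Y ^ q = (X ^ (1 - q) * X ^ q) * Y ^ q := by rw [h2]
    _ = X ^ (1 - q) * Y ^ q * X ^ q := by ring

omit hmul habs in
lemma optimize (α β : ℝ) (hα : 0 < α) (hβ : 0 < β) (X Y T : ℝ) (hX : 0 < X) (hY : 0 < Y)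
    (hT : ∀ ρ : ℝ, 0 < ρ → T ≤ X * ρ ^ α + Y * ρ ^ (-β)) :
    T ≤ 2 * (X ^ (β / (α + β)) * Y ^ (α / (α + β))) := by
  have hs : 0 < α + β := by linarith
  have hYX : 0 < Y / X := div_pos hY hX
  have hXY : 0 < X / Y := div_pos hX hY
  set ρ := (Y / X) ^ (1 / (α + β)) with hρdef
  have hρ : 0 < ρ := Real.rpow_pos_of_pos hYX _
  have key := hT ρ hρ
  have h1 : X * ρ ^ α = X ^ (β / (α + β)) * Y ^ (α / (α + β)) := by
    have e1 : ρ ^ α = (Y / X) ^ (α / (α + β)) := by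
      rw [hρdef, ← Real.rpow_mul hYX.le]
      congr 1
      field_simp
    have e2 : 1 - α / (α + β) = β / (α + β) := by
      field_simp
      ring
    rw [e1, aux_pow X Y _ hX hY, e2]
  have h2 : Y * ρ ^ (-β) = X ^ (β / (α + β)) * Y ^ (α / (α + β)) := by
    have e1 : ρ ^ (-β) = (Y / X) ^ (-(β / (α + β))) := by
      rw [hρdef, ← Real.rpow_mul hYX.le]
      congr 1
      field_simp
    have e3 : (Y / X) ^ (-(β / (α + β))) = (X / Y) ^ (β / (α + β)) := by
      rw [Real.rpow_neg hYX.le, ← Real.inv_rpow hYX.le, inv_div]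
    have e2 : 1 - β / (α + β) = α / (α + β) := by
      field_simp
      ring
    rw [e1, e3, aux_pow Y X _ hY hX, e2]
    ring
  calc T ≤ X * ρ ^ α + Y * ρ ^ (-β) := key
    _ = 2 * (X ^ (β / (α + β)) * Y ^ (α / (α + β))) := by rw [h1, h2]; ring


omit hmul habs in
lemma final_alg (cA CC A B nE P C₃ θ : ℝ)
    (hcA : 1 ≤ cA) (hCC : 0 < CC) (hA : 0 < A) (hB : 0 < B) (hnE : 0 < nE)
    (hP : 0 ≤ P) (hC₃ : 0 ≤ C₃) (hθ0 : 0 ≤ θ) (hθ1 : θ ≤ 1) :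
    ((cA * (CC * A) * P) * (2 * ((cA * (CC * A) * nE) ^ (1 - θ) * (2 * B * (nE * nE)) ^ θ))) * C₃
      ≤ ((4 * cA ^ 2) * CC ^ (2 - θ) * C₃ * A ^ (2 - θ) * B ^ θ * nE ^ (1 + θ)) * P := by
  have hcA0 : (0:ℝ) < cA := lt_of_lt_of_le one_pos hcA
  have e1 : (cA * (CC * A) * nE) ^ (1 - θ)
      = cA ^ (1 - θ) * (CC ^ (1 - θ) * A ^ (1 - θ)) * nE ^ (1 - θ) := by
    rw [Real.mul_rpow (by positivity) hnE.le, Real.mul_rpow (by positivity) (by positivity),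
      Real.mul_rpow hCC.le hA.le]
  have e2 : (2 * B * (nE * nE)) ^ θ = (2:ℝ) ^ θ * B ^ θ * (nE ^ θ * nE ^ θ) := by
    rw [Real.mul_rpow (by positivity) (by positivity), Real.mul_rpow (by norm_num) hB.le,
      Real.mul_rpow hnE.le hnE.le]
  have hCC2 : CC * CC ^ (1 - θ) = CC ^ (2 - θ) := by
    rw [show (2:ℝ) - θ = 1 + (1 - θ) by ring, Real.rpow_add hCC, Real.rpow_one]
  have hA2 : A * A ^ (1 - θ) = A ^ (2 - θ) := by
    rw [show (2:ℝ) - θ = 1 + (1 - θ) by ring, Real.rpow_add hA, Real.rpow_one]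
  have hnE2 : nE ^ (1 - θ) * (nE ^ θ * nE ^ θ) = nE ^ (1 + θ) := by
    rw [show (1:ℝ) + θ = (1 - θ) + θ + θ by ring, Real.rpow_add hnE, Real.rpow_add hnE]
    ring
  have hfac : 2 * (cA ^ (1 - θ) * (2:ℝ) ^ θ) ≤ 4 * cA := by
    have h1 : cA ^ (1 - θ) ≤ cA := by
      calc cA ^ (1 - θ) ≤ cA ^ (1:ℝ) :=
            Real.rpow_le_rpow_of_exponent_le hcA (by linarith)
        _ = cA := Real.rpow_one cA
    have h2 : (2:ℝ) ^ θ ≤ 2 := by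
      calc (2:ℝ) ^ θ ≤ (2:ℝ) ^ (1:ℝ) :=
            Real.rpow_le_rpow_of_exponent_le (by norm_num) hθ1
        _ = 2 := Real.rpow_one 2
    have h3 : (0:ℝ) ≤ cA ^ (1 - θ) := (Real.rpow_pos_of_pos hcA0 _).le
    have h4 : (0:ℝ) ≤ (2:ℝ) ^ θ := (Real.rpow_pos_of_pos two_pos _).le
    nlinarith
  calc ((cA * (CC * A) * P) * (2 * ((cA * (CC * A) * nE) ^ (1 - θ) * (2 * B * (nE * nE)) ^ θ))) * C₃
      = (2 * (cA ^ (1 - θ) * (2:ℝ) ^ θ)) *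
          (cA * (CC * CC ^ (1 - θ)) * (A * A ^ (1 - θ)) * B ^ θ *
            (nE ^ (1 - θ) * (nE ^ θ * nE ^ θ)) * P * C₃) := by
        rw [e1, e2]; ring
    _ = (2 * (cA ^ (1 - θ) * (2:ℝ) ^ θ)) *
          (cA * CC ^ (2 - θ) * A ^ (2 - θ) * B ^ θ * nE ^ (1 + θ) * P * C₃) := by
        rw [hCC2, hA2, hnE2]
    _ ≤ (4 * cA) *
          (cA * CC ^ (2 - θ) * A ^ (2 - θ) * B ^ θ * nE ^ (1 + θ) * P * C₃) := by
        refine mul_le_mul_of_nonneg_right hfac ?_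
        positivity
    _ = ((4 * cA ^ 2) * CC ^ (2 - θ) * C₃ * A ^ (2 - θ) * B ^ θ * nE ^ (1 + θ)) * P := by
        ring

end basic

end S16

theorem stmt_16 (n a b : ℝ) (hb : 0 < b) (hba : b ≤ a) (han : a < n) :
    ∃ C : ℝ, 0 < C ∧
      ∀ C₁ C₂ C₃ A B : ℝ, 0 ≤ C₁ → 0 ≤ C₂ → 0 ≤ C₃ → 0 ≤ A → 0 ≤ B →
      ∀ (G H : Type) [AddCommGroup G] [Fintype G] [DecidableEq G]
        [AddCommGroup H] [Fintype H]
        (e : G → H → ℂ) (BG : ℝ → Set G) (BH : ℝ → Set H)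
        (φ : ℝ → G → ℝ) (w : H → ℝ),
        (∀ (x y : G) (ξ : H), e (x + y) ξ = e x ξ * e y ξ) →
        (∀ (x : G) (ξ η : H), e x (ξ + η) = e x ξ * e x η) →
        (∀ (x : G) (ξ : H), ‖e x ξ‖ = 1) →
        (∀ x : G, ∑ ξ : H, e x ξ = if x = 0 then (Fintype.card G : ℂ) else 0) →
        (∀ ρ ρ' : ℝ, 0 < ρ → ρ ≤ ρ' → BG ρ ⊆ BG ρ') →
        (∀ (ρ : ℝ) (x : G), x ∈ BG ρ → -x ∈ BG ρ) →
        (∀ x : G, ∃ ρ : ℝ, 0 < ρ ∧ x ∈ BG ρ) →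
        (∀ ρ ρ' : ℝ, 0 < ρ → ρ ≤ ρ' → BH ρ ⊆ BH ρ') →
        (∀ (ρ : ℝ) (ξ : H), ξ ∈ BH ρ → -ξ ∈ BH ρ) →
        (∀ ξ : H, ∃ ρ : ℝ, 0 < ρ ∧ ξ ∈ BH ρ) →
        (∀ ρ : ℝ, 0 < ρ → ((BG ρ).ncard : ℝ) ≤ C₁ * ρ ^ n) →
        (∀ ρ : ℝ, 0 < ρ → ∀ x ∈ BG ρ, φ ρ x = 1) →
        (∀ ρ : ℝ, 0 < ρ → ∀ x : G, φ ρ x ≠ 0 → x ∈ BG (2 * ρ)) →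
        (∀ (ρ : ℝ) (x : G), |φ ρ x| ≤ 1) →
        (∀ ρ : ℝ, 0 < ρ → ∀ s : ℝ, 1 / ρ ≤ s → ∀ ξ : H, -ξ ∉ BH s →
          ‖∑ x : G, (φ ρ x : ℂ) * e (-x) ξ‖ ≤ C₂ * s ^ (-n)) →
        (∀ ρ : ℝ, 0 < ρ →
          (Fintype.card G : ℝ)⁻¹ *
              ∑ ξ : H, ‖∑ x : G, (φ ρ x : ℂ) * e (-x) ξ‖ ≤ C₃) →
        (∀ ξ : H, 0 ≤ w ξ) →
        (∀ ρ : ℝ, 0 < ρ → ∀ ξ : H,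
          ∑ η : H, Set.indicator (BH ρ) (fun _ => (1 : ℝ)) (η - ξ) * w η ≤ A * ρ ^ a) →
        (∀ ρ : ℝ, 0 < ρ → ∀ x : G, x ∉ BG ρ →
          ‖∑ ξ : H, (w ξ : ℂ) * e x ξ‖ ≤ B * ρ ^ (-b / 2)) →
        ∀ ρ : ℝ, 0 < ρ → ∀ E : Set G,
          ∑ x : G, ‖∑ y : G, Set.indicator E (fun _ => (1 : ℂ)) y *
              ((φ ρ (x - y) : ℂ) * ∑ ξ : H, (w ξ : ℂ) * e (x - y) ξ)‖ ^ 2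
            ≤ C * (C₁ + C₂) ^ (2 - 2 * (n - a) / (2 * (n - a) + b)) * C₃ *
                A ^ (2 - 2 * (n - a) / (2 * (n - a) + b)) *
                B ^ (2 * (n - a) / (2 * (n - a) + b)) *
                (E.ncard : ℝ) ^ (2 * (4 * (n - a) + b) / (4 * (n - a) + 2 * b)) *
                ρ ^ (n - a) := by
  have hn : 0 < n := lt_trans (lt_of_lt_of_le hb hba) han
  have hr1 : (2:ℝ) ^ (a - n) < 1 :=
    Real.rpow_lt_one_of_one_lt_of_neg one_lt_two (by linarith)
  have hr0 : (0:ℝ) < (2:ℝ) ^ (a - n) := Real.rpow_pos_of_pos two_pos _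
  have h2n1 : (1:ℝ) ≤ (2:ℝ) ^ n := by
    calc (1:ℝ) = (2:ℝ) ^ (0:ℝ) := (Real.rpow_zero 2).symm
      _ ≤ (2:ℝ) ^ n := Real.rpow_le_rpow_of_exponent_le (by norm_num) hn.le
  set cA : ℝ := (2:ℝ) ^ n / (1 - (2:ℝ) ^ (a - n)) with hcAdef
  have hrd : (0:ℝ) < 1 - (2:ℝ) ^ (a - n) := by linarith
  have hcA1 : 1 ≤ cA := by
    rw [hcAdef, le_div_iff₀ hrd]
    linarith
  have hcA0 : 0 < cA := lt_of_lt_of_le one_pos hcA1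
  refine ⟨4 * cA ^ 2, by positivity, ?_⟩
  intro C₁ C₂ C₃ A B hC₁ hC₂ hC₃ hA hB G H _ _ _ _ _ e BG BH φ w hmul hmulH habs horth
    hBGmono hBGsymm hBGcov hBHmono hBHsymm hBHcov hBGcard hφone hφsupp hφle hφdecay
    hφl1 hw hFmu hRmu ρ hρ E
  have hN : (0:ℝ) < (Fintype.card G : ℝ) := by exact_mod_cast Fintype.card_pos
  set θs : ℝ := 2 * (n - a) / (2 * (n - a) + b) with hθsdef
  have hden : (0:ℝ) < 2 * (n - a) + b := by linarith
  have hθ0 : 0 ≤ θs := by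
    rw [hθsdef]
    exact div_nonneg (by linarith) hden.le
  have hθ1 : θs ≤ 1 := by
    rw [hθsdef, div_le_one hden]
    linarith
  set χ : G → ℂ := fun y => Set.indicator E (fun _ => (1 : ℂ)) y with hχ
  set K : G → ℂ := fun z => ((φ ρ z : ℝ) : ℂ) * ∑ ξ : H, (w ξ : ℂ) * e z ξ with hK
  have hLHS : ∑ x : G, ‖∑ y : G, Set.indicator E (fun _ => (1 : ℂ)) y *
        ((φ ρ (x - y) : ℂ) * ∑ ξ : H, (w ξ : ℂ) * e (x - y) ξ)‖ ^ 2
      = ∑ x : G, Complex.normSq (S16.conv χ K x) := by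
    refine Finset.sum_congr rfl fun x _ => ?_
    rw [Complex.sq_norm]
    rfl
  rw [hLHS]
  have hRHSnn : 0 ≤ 4 * cA ^ 2 * (C₁ + C₂) ^ (2 - θs) * C₃ *
      A ^ (2 - θs) * B ^ θs *
      (E.ncard : ℝ) ^ (2 * (4 * (n - a) + b) / (4 * (n - a) + 2 * b)) * ρ ^ (n - a) := by
    have h1 : (0:ℝ) ≤ (C₁ + C₂) ^ (2 - θs) := Real.rpow_nonneg (by linarith) _
    have h2 : (0:ℝ) ≤ A ^ (2 - θs) := Real.rpow_nonneg hA _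
    have h3 : (0:ℝ) ≤ B ^ θs := Real.rpow_nonneg hB _
    have h4 : (0:ℝ) ≤ (E.ncard : ℝ) ^ (2 * (4 * (n - a) + b) / (4 * (n - a) + 2 * b)) :=
      Real.rpow_nonneg (Nat.cast_nonneg _) _
    have h5 : (0:ℝ) ≤ ρ ^ (n - a) := (Real.rpow_pos_of_pos hρ _).le
    have h6 : (0:ℝ) ≤ 4 * cA ^ 2 := by positivity
    positivity
  -- degenerate case : vanishing kernel or vanishing set
  have hzero_case : (∀ x : G, S16.conv χ K x = 0) →
      ∑ x : G, Complex.normSq (S16.conv χ K x)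
        ≤ 4 * cA ^ 2 * (C₁ + C₂) ^ (2 - θs) * C₃ * A ^ (2 - θs) * B ^ θs *
            (E.ncard : ℝ) ^ (2 * (4 * (n - a) + b) / (4 * (n - a) + 2 * b)) * ρ ^ (n - a) := by
    intro h
    have : ∑ x : G, Complex.normSq (S16.conv χ K x) = 0 :=
      Finset.sum_eq_zero fun x _ => by rw [h x, Complex.normSq_zero]
    rw [this]
    exact hRHSnn
  by_cases hEne : E.Nonempty
  swap
  · refine hzero_case fun x => Finset.sum_eq_zero fun y _ => ?_
    have : χ y = 0 := by
      rw [hχ]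
      rw [Set.not_nonempty_iff_eq_empty] at hEne
      simp [hEne]
    rw [this, zero_mul]
  by_cases hApos : 0 < A
  swap
  · -- A = 0 forces w ≡ 0
    have hA0 : A = 0 := le_antisymm (not_lt.1 hApos) hA
    have hw0 : ∀ ζ : H, w ζ = 0 := by
      intro ζ
      obtain ⟨r0, hr0, hmem⟩ := hBHcov (0 : H)
      have hsum := hFmu r0 hr0 ζ
      rw [hA0, zero_mul] at hsum
      have hterm : w ζ ≤ ∑ η : H, Set.indicator (BH r0) (fun _ => (1:ℝ)) (η - ζ) * w η := by
        have h1 : Set.indicator (BH r0) (fun _ => (1:ℝ)) (ζ - ζ) * w ζ = w ζ := by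
          rw [sub_self, Set.indicator_of_mem hmem, one_mul]
        rw [← h1]
        refine Finset.single_le_sum
          (f := fun η => Set.indicator (BH r0) (fun _ => (1:ℝ)) (η - ζ) * w η)
          (fun η _ => mul_nonneg (Set.indicator_nonneg (fun _ _ => zero_le_one) _) (hw η))
          (Finset.mem_univ ζ)
      exact le_antisymm (hterm.trans hsum) (hw ζ)
    refine hzero_case fun x => Finset.sum_eq_zero fun y _ => ?_
    have hKz : K (x - y) = 0 := by
      have h0 : ∑ ξ : H, (w ξ : ℂ) * e (x - y) ξ = 0 :=
        Finset.sum_eq_zero fun ξ _ => by rw [hw0 ξ]; simp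
      simp only [hK]
      rw [h0, mul_zero]
    rw [hKz, mul_zero]
  by_cases hBpos : 0 < B
  swap
  · -- B = 0 forces the measure to vanish
    have hB0 : B = 0 := le_antisymm (not_lt.1 hBpos) hB
    have hmu0 : ∀ z : G, ∑ ξ : H, (w ξ : ℂ) * e z ξ = 0 := by
      intro z
      set ρ₀ : ℝ := (1 / (C₁ + 1)) ^ (1 / n) with hρ₀def
      have hρ₀ : 0 < ρ₀ := Real.rpow_pos_of_pos (by positivity) _
      have hρ₀n : ρ₀ ^ n = 1 / (C₁ + 1) := by
        rw [hρ₀def, ← Real.rpow_mul (by positivity : (0:ℝ) ≤ 1 / (C₁ + 1)),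
          one_div n, inv_mul_cancel₀ hn.ne', Real.rpow_one]
      have hempty : z ∉ BG ρ₀ := by
        intro hz
        have hcard := hBGcard ρ₀ hρ₀
        rw [hρ₀n] at hcard
        have h1 : (1:ℝ) ≤ ((BG ρ₀).ncard : ℝ) := by
          have : 0 < (BG ρ₀).ncard := by
            refine (Set.ncard_pos (Set.toFinite _)).2 ⟨z, hz⟩
          exact_mod_cast this
        have h2 : C₁ * (1 / (C₁ + 1)) < 1 := by
          rw [mul_one_div, div_lt_one (by linarith)]
          linarith
        linarith
      have := hRmu ρ₀ hρ₀ z hempty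
      rw [hB0, zero_mul] at this
      exact norm_eq_zero.1 (le_antisymm this (norm_nonneg _))
    refine hzero_case fun x => Finset.sum_eq_zero fun y _ => ?_
    have hKz : K (x - y) = 0 := by
      simp only [hK]
      rw [hmu0 (x - y), mul_zero]
    rw [hKz, mul_zero]
  by_cases hCCpos : 0 < C₁ + C₂
  swap
  · -- C₁ = 0 forces φ to vanish
    have hC₁0 : C₁ = 0 := by
      have : C₁ + C₂ = 0 := le_antisymm (not_lt.1 hCCpos) (by linarith)
      linarith
    have hφ0 : ∀ z : G, φ ρ z = 0 := by
      intro z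
      by_contra hphz
      have hz := hφsupp ρ hρ z hphz
      have hcard := hBGcard (2 * ρ) (by linarith)
      rw [hC₁0, zero_mul] at hcard
      have h1 : (1:ℝ) ≤ ((BG (2*ρ)).ncard : ℝ) := by
        have : 0 < (BG (2*ρ)).ncard := (Set.ncard_pos (Set.toFinite _)).2 ⟨z, hz⟩
        exact_mod_cast this
      linarith
    refine hzero_case fun x => Finset.sum_eq_zero fun y _ => ?_
    have hKz : K (x - y) = 0 := by
      simp only [hK]
      simp [hφ0 (x - y)]
    rw [hKz, mul_zero]
  -- ============ main case ============
  have hnE0 : (0:ℝ) < (E.ncard : ℝ) := by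
    have : 0 < E.ncard := (Set.ncard_pos (Set.toFinite _)).2 hEne
    exact_mod_cast this
  set nE : ℝ := (E.ncard : ℝ) with hnEdef
  set X : ℝ := cA * ((C₁ + C₂) * A) * nE with hXdef
  set Y : ℝ := 2 * B * (nE * nE) with hYdef
  set M : ℝ := cA * ((C₁ + C₂) * A) * ρ ^ (n - a) with hMdef
  set R : ℝ := 2 * (X ^ (1 - θs) * Y ^ θs) with hRdef
  have hXpos : 0 < X := by
    rw [hXdef]
    exact mul_pos (mul_pos hcA0 (mul_pos hCCpos hApos)) hnE0
  have hYpos : 0 < Y := by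
    rw [hYdef]
    exact mul_pos (mul_pos two_pos hBpos) (mul_pos hnE0 hnE0)
  have hM0 : 0 ≤ M := by
    rw [hMdef]
    exact (mul_pos (mul_pos hcA0 (mul_pos hCCpos hApos)) (Real.rpow_pos_of_pos hρ _)).le
  have hR0 : 0 ≤ R := by
    rw [hRdef]
    exact (mul_pos two_pos (mul_pos (Real.rpow_pos_of_pos hXpos _)
      (Real.rpow_pos_of_pos hYpos _))).le
  have hαβ : (0:ℝ) < (n - a) + b / 2 := by linarith
  have halpha : (n - a) / ((n - a) + b / 2) = θs := by
    rw [hθsdef, div_eq_div_iff hαβ.ne' hden.ne']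
    ring
  have hbeta : (b / 2) / ((n - a) + b / 2) = 1 - θs := by
    rw [hθsdef, eq_sub_iff_add_eq, div_add_div _ _ (ne_of_gt hαβ) (ne_of_gt hden),
      div_eq_one_iff_eq (by positivity)]
    ring
  have hφsum : ∑ z : G, |φ ρ z| ≤ C₁ * (2 * ρ) ^ n :=
    S16.phi_abs_sum BG C₁ n ρ (hBGcard (2 * ρ) (by linarith)) (φ ρ) (hφsupp ρ hρ) (hφle ρ)
  -- uniform restriction bound for modulated indicators
  have hres : ∀ τ : H,
      ∑ ζ : H, w ζ * Complex.normSq (S16.Fhat e (fun x => χ x * e (-x) τ) ζ) ≤ R := by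
    intro τ
    have hgabs : ∀ x : G, ‖χ x * e (-x) τ‖
        = Set.indicator E (fun _ => (1:ℝ)) x := by
      intro x
      rw [norm_mul, habs, mul_one, hχ]
      by_cases hx : x ∈ E
      · simp [Set.indicator_of_mem hx]
      · simp [Set.indicator_of_notMem hx]
    have hT : ∀ ρ' : ℝ, 0 < ρ' →
        ∑ ζ : H, w ζ * Complex.normSq (S16.Fhat e (fun x => χ x * e (-x) τ) ζ)
          ≤ X * ρ' ^ (n - a) + Y * ρ' ^ (-(b / 2)) := by
      intro ρ' hρ'
      have h1 := S16.restriction e hmul hmulH habs horth BG BH hBHmono hBHcov φ w hw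
        n a b C₁ C₂ A B han hC₁ hC₂ hA hB hBGcard hφone hφsupp hφle hφdecay hFmu hRmu
        E (fun x => χ x * e (-x) τ) hgabs ρ' hρ'
      have h2 : (-b / 2 : ℝ) = -(b / 2) := by ring
      rw [h2] at h1
      rw [hXdef, hYdef, hnEdef]
      exact h1
    have h3 := S16.optimize (n - a) (b / 2) (by linarith) (by linarith) X Y _ hXpos hYpos hT
    rw [hbeta, halpha] at h3
    rw [hRdef]
    exact h3
  -- the master chain
  calc ∑ x : G, Complex.normSq (S16.conv χ K x)
      = (Fintype.card G : ℝ)⁻¹ * ∑ ξ : H,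
          Complex.normSq (S16.Fhat e χ ξ) * Complex.normSq (S16.Fhat e K ξ) :=
        S16.master e hmul habs horth χ K
    _ ≤ (Fintype.card G : ℝ)⁻¹ * ∑ ξ : H, Complex.normSq (S16.Fhat e χ ξ) *
          (M * ∑ η : H, w η *
            ‖S16.Fhat e (fun x => (φ ρ x : ℂ)) (ξ - η)‖) := by
        refine mul_le_mul_of_nonneg_left (Finset.sum_le_sum fun ξ _ => ?_)
          (inv_nonneg.2 hN.le)
        refine mul_le_mul_of_nonneg_left ?_ (Complex.normSq_nonneg _)
        have hKb : ‖S16.Fhat e K ξ‖ ≤ M := by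
          rw [hMdef, hK]
          exact S16.mu1_bound e hmul hmulH habs BH hBHmono hBHcov w hw n a C₁ C₂ A han
            hC₁ hC₂ hA hFmu ρ hρ (φ ρ) hφsum (hφdecay ρ hρ) ξ
        have hKtri : ‖S16.Fhat e K ξ‖
            ≤ ∑ η : H, w η * ‖S16.Fhat e (fun x => (φ ρ x : ℂ)) (ξ - η)‖ := by
          rw [hK]
          exact S16.mu1_tri e hmul hmulH habs BH w hw (φ ρ) ξ
        calc Complex.normSq (S16.Fhat e K ξ)
            = ‖S16.Fhat e K ξ‖ * ‖S16.Fhat e K ξ‖ := by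
              rw [Complex.normSq_eq_norm_sq]
              ring
          _ ≤ M * ∑ η : H, w η *
                ‖S16.Fhat e (fun x => (φ ρ x : ℂ)) (ξ - η)‖ :=
              mul_le_mul hKb hKtri (norm_nonneg _) hM0
    _ = (Fintype.card G : ℝ)⁻¹ * (M * ∑ τ : H,
          ‖S16.Fhat e (fun x => (φ ρ x : ℂ)) τ‖ *
            ∑ ξ : H, Complex.normSq (S16.Fhat e χ ξ) * w (ξ - τ)) := by
        congr 1
        calc ∑ ξ : H, Complex.normSq (S16.Fhat e χ ξ) *
              (M * ∑ η : H, w η *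
                ‖S16.Fhat e (fun x => (φ ρ x : ℂ)) (ξ - η)‖)
            = ∑ ξ : H, ∑ η : H, M * (Complex.normSq (S16.Fhat e χ ξ) *
                (w η * ‖S16.Fhat e (fun x => (φ ρ x : ℂ)) (ξ - η)‖)) := by
              refine Finset.sum_congr rfl fun ξ _ => ?_
              rw [Finset.mul_sum, Finset.mul_sum]
              exact Finset.sum_congr rfl fun η _ => by ring
          _ = ∑ ξ : H, ∑ τ : H, M * (Complex.normSq (S16.Fhat e χ ξ) *
                (w (ξ - τ) * ‖S16.Fhat e (fun x => (φ ρ x : ℂ)) τ‖)) := by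
              refine Finset.sum_congr rfl fun ξ _ => ?_
              refine Fintype.sum_equiv (Equiv.subLeft ξ) _ _ fun η => ?_
              simp only [Equiv.subLeft_apply, sub_sub_cancel]
          _ = M * ∑ τ : H, ‖S16.Fhat e (fun x => (φ ρ x : ℂ)) τ‖ *
                ∑ ξ : H, Complex.normSq (S16.Fhat e χ ξ) * w (ξ - τ) := by
              rw [Finset.sum_comm, Finset.mul_sum]
              refine Finset.sum_congr rfl fun τ _ => ?_
              rw [Finset.mul_sum, Finset.mul_sum]
              exact Finset.sum_congr rfl fun ξ _ => by ring
    _ ≤ (Fintype.card G : ℝ)⁻¹ * (M * ∑ τ : H,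
          ‖S16.Fhat e (fun x => (φ ρ x : ℂ)) τ‖ * R) := by
        refine mul_le_mul_of_nonneg_left (mul_le_mul_of_nonneg_left
          (Finset.sum_le_sum fun τ _ => ?_) hM0) (inv_nonneg.2 hN.le)
        refine mul_le_mul_of_nonneg_left ?_ (norm_nonneg _)
        have hreidx : ∑ ξ : H, Complex.normSq (S16.Fhat e χ ξ) * w (ξ - τ)
            = ∑ ζ : H, w ζ * Complex.normSq (S16.Fhat e (fun x => χ x * e (-x) τ) ζ) := by
          have hfg : ∀ ζ : H, S16.Fhat e (fun x => χ x * e (-x) τ) ζ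
              = S16.Fhat e χ (ζ + τ) := by
            intro ζ
            unfold S16.Fhat
            refine Finset.sum_congr rfl fun x _ => ?_
            rw [hmulH (-x) ζ τ]
            ring
          refine Fintype.sum_equiv (Equiv.subRight τ) _ _ fun ξ => ?_
          simp only [Equiv.subRight_apply]
          rw [hfg (ξ - τ), sub_add_cancel]
          ring
        rw [hreidx]
        exact hres τ
    _ = (M * R) * ((Fintype.card G : ℝ)⁻¹ *
          ∑ τ : H, ‖S16.Fhat e (fun x => (φ ρ x : ℂ)) τ‖) := by
        rw [← Finset.sum_mul]
        ring
    _ ≤ (M * R) * C₃ := by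
        refine mul_le_mul_of_nonneg_left ?_ (mul_nonneg hM0 hR0)
        exact hφl1 ρ hρ
    _ ≤ 4 * cA ^ 2 * (C₁ + C₂) ^ (2 - θs) * C₃ * A ^ (2 - θs) * B ^ θs *
          nE ^ (2 * (4 * (n - a) + b) / (4 * (n - a) + 2 * b)) * ρ ^ (n - a) := by
        have hes : 2 * (4 * (n - a) + b) / (4 * (n - a) + 2 * b) = 1 + θs := by
          have hden2 : (0:ℝ) < 4 * (n - a) + 2 * b := by linarith
          rw [hθsdef, div_eq_iff hden2.ne']
          field_simp
          ring
        rw [hes]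
        have hfinal := S16.final_alg cA (C₁ + C₂) A B nE (ρ ^ (n - a)) C₃ θs hcA1 hCCpos
          hApos hBpos hnE0 (Real.rpow_pos_of_pos hρ _).le hC₃ hθ0 hθ1
        calc (M * R) * C₃
            = ((cA * ((C₁ + C₂) * A) * ρ ^ (n - a)) *
                (2 * ((cA * ((C₁ + C₂) * A) * nE) ^ (1 - θs) *
                  (2 * B * (nE * nE)) ^ θs))) * C₃ := by
              rw [hMdef, hRdef, hXdef, hYdef]
          _ ≤ ((4 * cA ^ 2) * (C₁ + C₂) ^ (2 - θs) * C₃ * A ^ (2 - θs) * B ^ θs *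
                nE ^ (1 + θs)) * ρ ^ (n - a) := hfinal
          _ = 4 * cA ^ 2 * (C₁ + C₂) ^ (2 - θs) * C₃ * A ^ (2 - θs) * B ^ θs *
                nE ^ (1 + θs) * ρ ^ (n - a) := by ring
end
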